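/- arXiv:2603.19717 — 2 statements merged into one kernel-verified Lean document; each statement's English description precedes it below -/
import Mathlib

section
/- Let K be a cycle-free Markov kernel on a countable set G, F the CMT with kernel K (law ℙ_G), and Q_G = (Σ_{v∈G} δ_v) ⊗ ℙ_G. Then the tail branch σ-algebra coincides modulo Q_G with the pullback under π of the invariant path σ-algebra: (a) for every tail branch-property A ⊆ G × G^G there exists an invariant path property A' ⊆ G^ℕ with Q_G(A Δ π^{-1}(A')) = 0; and (b) for every invariant path property A', π^{-1}(A') is a tail branch-property. -/
open MeasureTheory ENNReal

namespace CMTPaper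

variable {G : Type*}

/-- The `n`-step kernel of a Markov kernel `K` on a countable set `G`:
`K^0(x,·) = δ_x` and `K^{n+1}(x,A) = Σ_y K(x,{y})·K^n(y,A)`. -/
noncomputable def nStep [MeasurableSpace G] (K : G → Measure G) : ℕ → G → Measure G
  | 0 => fun x => Measure.dirac x
  | n + 1 => fun x => Measure.sum fun y => K x {y} • nStep K n y

/-- A kernel is cycle-free if `K^m(x,{x}) = 0` for every `x` and every `m ≥ 1`. -/
def CycleFree [MeasurableSpace G] (K : G → Measure G) : Prop :=
  ∀ x : G, ∀ m : ℕ, 1 ≤ m → nStep K m x {x} = 0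

/-- `P` is the law on path space `G^ℕ` of the Markov chain with kernel `K` started at `x`
(characterized by its finite-dimensional cylinder probabilities). -/
def IsPathLaw [MeasurableSpace G] (K : G → Measure G) (x : G) (P : Measure (ℕ → G)) : Prop :=
  ∀ (n : ℕ) (u : ℕ → G), u 0 = x →
    P {ω | ∀ i ≤ n, ω i = u i} = ∏ i ∈ Finset.range n, K (u i) {u (i + 1)}

/-- The set of collisions of two paths: pairs `(m,n)` with `m,n ≥ 1` and `ω m = ω' n`. -/
def collisions (ω ω' : ℕ → G) : Set (ℕ × ℕ) :=
  {p : ℕ × ℕ | 1 ≤ p.1 ∧ 1 ≤ p.2 ∧ ω p.1 = ω' p.2}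

/-- `μ` is the law on `G^G` of the coalescing Markov trajectories (CMT) with kernel `K`,
i.e. the product measure `⊗_x K(x,·)` (characterized on cylinders). -/
def IsCMTLaw [MeasurableSpace G] (K : G → Measure G) (μ : Measure (G → G)) : Prop :=
  ∀ (s : Finset G) (u : G → G), μ {f | ∀ x ∈ s, f x = u x} = ∏ x ∈ s, K x {u x}

/-- Adjacency in the graph of `f`: an edge between `x` and `f x` for every `x`. -/
def Adj (f : G → G) (a b : G) : Prop := f a = b ∨ f b = a

/-- `a` and `b` lie in the same connected component of the graph of `f`. -/
def SameComponent (f : G → G) (a b : G) : Prop := Relation.ReflTransGen (Adj f) a b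

/-- The connected component of `v` in the graph of `f`. -/
def component (f : G → G) (v : G) : Set G := {u | SameComponent f u v}

/-- The level set of `v`: points whose forward orbit merges with that of `v` after the same
number of steps. -/
def levelSet (f : G → G) (v : G) : Set G := {w | ∃ n : ℕ, f^[n] w = f^[n] v}

/-- The ancestor-line map `π (v, f) = (f^{(n)}(v))_{n ≥ 0}`. -/
def ancLine : G × (G → G) → ℕ → G := fun p n => p.2^[n] p.1

/-- Total-variation distance between two measures on a countable discrete space. -/
noncomputable def tvDist [MeasurableSpace G] (ν₁ ν₂ : Measure G) : ℝ≥0∞ :=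
  ∑' y : G, ((ν₁ {y} - ν₂ {y}) + (ν₂ {y} - ν₁ {y}))

/-- The mass `‖ν₁ ∧ ν₂‖ = Σ_y min(ν₁{y}, ν₂{y})` of the meet of two measures. -/
noncomputable def meetMass [MeasurableSpace G] (ν₁ ν₂ : Measure G) : ℝ≥0∞ :=
  ∑' y : G, min (ν₁ {y}) (ν₂ {y})

/-- The shift on path space, `σ (x_i)_{i≥0} = (x_{i+1})_{i≥0}`. -/
def shift : (ℕ → G) → ℕ → G := fun ω i => ω (i + 1)

/-- An invariant path property: a measurable shift-invariant subset of path space. -/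
def IsInvariantPathProperty [MeasurableSpace G] (A : Set (ℕ → G)) : Prop :=
  MeasurableSet A ∧ shift ⁻¹' A = A

/-- The tail σ-algebra `⋂_n σ((x_i)_{i ≥ n})` on path space. -/
def tailMS (G : Type*) [MeasurableSpace G] : MeasurableSpace (ℕ → G) :=
  ⨅ n : ℕ, MeasurableSpace.comap (fun ω : ℕ → G => fun i => ω (n + i)) inferInstance

/-- A tail path property: a set in the tail σ-algebra of path space. -/
def IsTailPathProperty [MeasurableSpace G] (A : Set (ℕ → G)) : Prop :=
  MeasurableSet[tailMS G] A

/-- A function `h` is `K`-harmonic if `h(x) = Σ_y K(x,{y}) h(y)` for every `x`. -/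
def IsKHarmonic [MeasurableSpace G] (K : G → Measure G) (h : G → ℝ) : Prop :=
  ∀ x : G, h x = ∑' y : G, (K x {y}).toReal * h y

/-- `K` has the Liouville property: every bounded `K`-harmonic function is constant. -/
def LiouvilleProperty [MeasurableSpace G] (K : G → Measure G) : Prop :=
  ∀ h : G → ℝ, (∃ C : ℝ, ∀ x, |h x| ≤ C) → IsKHarmonic K h → ∀ x y : G, h x = h y

/-- Adjacency within a vertex subset `S` of the graph of `f`. -/
def AdjIn (f : G → G) (S : Set G) (a b : G) : Prop := Adj f a b ∧ a ∈ S ∧ b ∈ S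

/-- The connected component of `a` in the subgraph of the graph of `f` induced by `S`. -/
def compIn (f : G → G) (S : Set G) (a : G) : Set G :=
  {b | Relation.ReflTransGen (AdjIn f S) a b}

/-- `B` is a branch of the component of `v`: a connected component of `C_f(v) ∖ U` for some
finite set `U` of vertices. -/
def IsBranch (f : G → G) (v : G) (B : Set G) : Prop :=
  ∃ U : Set G, U.Finite ∧ ∃ a ∈ component f v \ U, B = compIn f (component f v \ U) a

/-- `B` is an ancestral branch of the component of `v`: a branch that eventually contains
the forward orbit of `v`. -/
def IsAncestralBranch (f : G → G) (v : G) (B : Set G) : Prop :=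
  IsBranch f v B ∧ ∃ N : ℕ, ∀ n ≥ N, f^[n] v ∈ B

/-- `f` and `f'` share a common ancestral branch of the component of `v`, on which they
coincide. -/
def SharesAncestralBranch (v : G) (f f' : G → G) : Prop :=
  ∃ B : Set G, IsAncestralBranch f v B ∧ IsAncestralBranch f' v B ∧ Set.EqOn f f' B

/-- A component-property: a measurable subset of `G × G^G` invariant under moving the root
within its connected component. -/
def IsComponentProperty [MeasurableSpace G] (A : Set (G × (G → G))) : Prop :=
  MeasurableSet A ∧
  ∀ (f : G → G) (v v' : G), SameComponent f v v' → ((v, f) ∈ A ↔ (v', f) ∈ A)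

/-- A level-set-property: a measurable subset of `G × G^G` invariant under moving the root
within its level set. -/
def IsLevelSetProperty [MeasurableSpace G] (A : Set (G × (G → G))) : Prop :=
  MeasurableSet A ∧
  ∀ (f : G → G) (v v' : G), v' ∈ levelSet f v → ((v, f) ∈ A ↔ (v', f) ∈ A)

/-- A tail branch-property: a component-property insensitive to finite modifications that
preserve a common ancestral branch. -/
def IsTailBranchProperty [MeasurableSpace G] (A : Set (G × (G → G))) : Prop :=
  IsComponentProperty A ∧
  ∀ (v : G) (f f' : G → G), {x | f x ≠ f' x}.Finite → SharesAncestralBranch v f f' →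
    ((v, f) ∈ A ↔ (v, f') ∈ A)

/-- A tail level-set-property: a level-set-property insensitive to finite modifications that
modify the level set of the root at only finitely many points. -/
def IsTailLevelSetProperty [MeasurableSpace G] (A : Set (G × (G → G))) : Prop :=
  IsLevelSetProperty A ∧
  ∀ (v : G) (f f' : G → G), {x | f x ≠ f' x}.Finite →
    (symmDiff (levelSet f v) (levelSet f' v)).Finite →
    ((v, f) ∈ A ↔ (v, f') ∈ A)


-- ============ auxiliary deterministic lemmas ============

lemma adjSymm (f : G → G) : Symmetric (Adj f) := fun _ _ h => h.symm

lemma sameComponent_symm {f : G → G} {a b : G} (h : SameComponent f a b) :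
    SameComponent f b a := by
  haveI : Std.Symm (Adj f) := ⟨fun _ _ h => adjSymm f h⟩
  exact Std.Symm.symm (r := Relation.ReflTransGen (Adj f)) a b h

lemma sameComponent_iterate (f : G → G) (v : G) (n : ℕ) : SameComponent f (f^[n] v) v := by
  induction n with
  | zero => exact Relation.ReflTransGen.refl
  | succ n ih =>
    refine Relation.ReflTransGen.head ?_ ih
    exact Or.inr (Function.iterate_succ_apply' f n v).symm

lemma compIn_subset {f : G → G} {S : Set G} {a : G} (ha : a ∈ S) : compIn f S a ⊆ S := by
  intro b hb
  induction hb with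
  | refl => exact ha
  | tail _ h2 _ => exact h2.2.2

lemma compIn_compl_eq (f : G → G) (v : G) (D : Set G) :
    compIn f Dᶜ v = compIn f (component f v \ D) v := by
  apply Set.Subset.antisymm
  · intro b hb
    have : b ∈ component f v ∧ b ∈ compIn f (component f v \ D) v := by
      induction hb with
      | refl => exact ⟨Relation.ReflTransGen.refl, Relation.ReflTransGen.refl⟩
      | tail _ h2 ih =>
        have hc : _ ∈ component f v := Relation.ReflTransGen.head (adjSymm f h2.1) ih.1
        exact ⟨hc, ih.2.tail ⟨h2.1, ⟨ih.1, h2.2.1⟩, ⟨hc, h2.2.2⟩⟩⟩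
    exact this.2
  · intro b hb
    exact Relation.ReflTransGen.mono (p := AdjIn f Dᶜ) (fun x y h => ⟨h.1, h.2.1.2, h.2.2.2⟩) _ _ hb

lemma compIn_congr {f f' : G → G} {S : Set G} (h : ∀ x ∈ S, f x = f' x) (a : G) :
    compIn f S a = compIn f' S a := by
  ext b
  constructor <;> intro hb <;> refine Relation.ReflTransGen.mono ?_ a b hb <;>
    rintro x y ⟨hadj, hx, hy⟩ <;> refine ⟨?_, hx, hy⟩
  · cases hadj with
    | inl h1 => exact Or.inl (by rw [← h x hx, h1])
    | inr h1 => exact Or.inr (by rw [← h y hy, h1])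
  · cases hadj with
    | inl h1 => exact Or.inl (by rw [h x hx, h1])
    | inr h1 => exact Or.inr (by rw [h y hy, h1])

lemma orbit_mem_compIn (f : G → G) (v : G) (D : Set G) (h : ∀ n, f^[n] v ∉ D) (n : ℕ) :
    f^[n] v ∈ compIn f Dᶜ v := by
  induction n with
  | zero => exact Relation.ReflTransGen.refl
  | succ n ih =>
    exact ih.tail ⟨Or.inl (Function.iterate_succ_apply' f n v).symm, h n, h (n + 1)⟩

lemma orbit_eq_of_eq_on_orbit {f f' : G → G} {v : G}
    (horb : ∀ n, f (f^[n] v) = f' (f^[n] v)) : ∀ n, f'^[n] v = f^[n] v := by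
  intro n
  induction n with
  | zero => rfl
  | succ n ih =>
    rw [Function.iterate_succ_apply', Function.iterate_succ_apply', ih, ← horb n]

lemma shares_of_eq_on_orbit {f f' : G → G} {v : G}
    (hfin : {x | f x ≠ f' x}.Finite) (horb : ∀ n, f (f^[n] v) = f' (f^[n] v)) :
    SharesAncestralBranch v f f' := by
  set D := {x | f x ≠ f' x} with hD
  have hDorb : ∀ n, f^[n] v ∉ D := fun n hn => hn (horb n)
  have hvD : v ∉ D := hDorb 0
  have hEqc : ∀ x ∈ Dᶜ, f x = f' x := fun x hx => not_not.mp hx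
  refine ⟨compIn f Dᶜ v, ⟨⟨D, hfin, v, ⟨Relation.ReflTransGen.refl, hvD⟩,
    compIn_compl_eq f v D⟩, 0, fun n _ => orbit_mem_compIn f v D hDorb n⟩, ?_, ?_⟩
  · refine ⟨⟨D, hfin, v, ⟨Relation.ReflTransGen.refl, hvD⟩, ?_⟩, 0, fun n _ => ?_⟩
    · rw [compIn_congr hEqc v]
      exact compIn_compl_eq f' v D
    · rw [orbit_eq_of_eq_on_orbit horb n]
      exact orbit_mem_compIn f v D hDorb n
  · intro x hx
    exact hEqc x (compIn_subset (show v ∈ Dᶜ from hvD) hx)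

lemma mem_iff_of_eq_on_orbit [MeasurableSpace G] {A : Set (G × (G → G))}
    (hA : IsTailBranchProperty A) {v : G} {f f' : G → G}
    (hfin : {x | f x ≠ f' x}.Finite) (horb : ∀ n, f (f^[n] v) = f' (f^[n] v)) :
    ((v, f) ∈ A ↔ (v, f') ∈ A) :=
  hA.2 v f f' hfin (shares_of_eq_on_orbit hfin horb)

-- ============ path-space lemmas ============

lemma shift_invariant_mem {A' : Set (ℕ → G)} (h : shift ⁻¹' A' = A') (ω : ℕ → G) :
    ω ∈ A' ↔ shift ω ∈ A' := by
  conv_lhs => rw [← h]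
  exact Iff.rfl

lemma shift_invariant_mem_add {A' : Set (ℕ → G)} (h : shift ⁻¹' A' = A') (ω : ℕ → G) (m : ℕ) :
    ω ∈ A' ↔ (fun n => ω (n + m)) ∈ A' := by
  induction m with
  | zero => simp
  | succ m ih =>
    have he : (fun n => ω (n + (m + 1))) = shift (fun n => ω (n + m)) := by
      funext n
      show ω (n + (m + 1)) = ω (n + 1 + m)
      ring_nf
    rw [he]
    exact ih.trans (shift_invariant_mem h _)

lemma ancLine_apply_eq (f : G → G) (a : G) : ancLine (f a, f) = shift (ancLine (a, f)) := by
  funext n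
  show f^[n] (f a) = f^[n+1] a
  exact (Function.iterate_succ_apply f n a).symm

lemma anc_step {A' : Set (ℕ → G)} (h : shift ⁻¹' A' = A') {f : G → G} {b c : G}
    (hbc : Adj f b c) : (ancLine (b, f) ∈ A' ↔ ancLine (c, f) ∈ A') := by
  cases hbc with
  | inl hb => rw [← hb, ancLine_apply_eq]; exact shift_invariant_mem h _
  | inr hc => rw [← hc, ancLine_apply_eq]; exact (shift_invariant_mem h _).symm

lemma anc_mem_iff_of_sameComponent {A' : Set (ℕ → G)} (h : shift ⁻¹' A' = A') {f : G → G}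
    {a b : G} (hab : SameComponent f a b) : (ancLine (a, f) ∈ A' ↔ ancLine (b, f) ∈ A') := by
  induction hab with
  | refl => exact Iff.rfl
  | tail _ h2 ih => exact ih.trans (anc_step h h2)

lemma measurable_eval_pair [MeasurableSpace G] [MeasurableSingletonClass G] [Countable G] :
    Measurable (fun q : (G → G) × G => q.1 q.2) := by
  apply measurable_to_countable'
  intro y
  have : (fun q : (G → G) × G => q.1 q.2) ⁻¹' {y}
      = ⋃ x : G, ((fun q : (G → G) × G => q.2) ⁻¹' {x} ∩ (fun q : (G → G) × G => q.1 x) ⁻¹' {y}) := by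
    ext q
    simp only [Set.mem_preimage, Set.mem_singleton_iff, Set.mem_iUnion, Set.mem_inter_iff]
    constructor
    · intro hq; exact ⟨q.2, rfl, hq⟩
    · rintro ⟨x, rfl, hx⟩; exact hx
  rw [this]
  exact MeasurableSet.iUnion fun x =>
    (measurable_snd (measurableSet_singleton x)).inter
      (((measurable_pi_apply x).comp measurable_fst) (measurableSet_singleton y))

lemma measurable_iter [MeasurableSpace G] [MeasurableSingletonClass G] [Countable G]
    (v : G) (n : ℕ) : Measurable (fun f : G → G => f^[n] v) := by
  induction n with
  | zero => simp only [Function.iterate_zero, id_eq]; exact measurable_const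
  | succ n ih =>
    simp only [Function.iterate_succ_apply']
    exact measurable_eval_pair.comp (measurable_id.prodMk ih)

lemma measurable_ancLine [MeasurableSpace G] [MeasurableSingletonClass G] [Countable G] :
    Measurable (ancLine : G × (G → G) → ℕ → G) := by
  rw [measurable_pi_iff]
  intro n
  induction n with
  | zero => exact measurable_fst
  | succ n ih =>
    have : (fun p : G × (G → G) => ancLine p (n + 1)) = fun p => p.2 (ancLine p n) := by
      funext p
      exact Function.iterate_succ_apply' _ _ _
    rw [this]
    exact measurable_eval_pair.comp (measurable_snd.prodMk ih)

-- ============ Part (b) ============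

theorem partB [MeasurableSpace G] [MeasurableSingletonClass G] [Countable G]
    (A' : Set (ℕ → G)) (h : IsInvariantPathProperty A') :
    IsTailBranchProperty (ancLine ⁻¹' A') := by
  obtain ⟨hm, hs⟩ := h
  refine ⟨⟨measurable_ancLine hm, ?_⟩, ?_⟩
  · intro f v v' hvv'
    exact anc_mem_iff_of_sameComponent hs hvv'
  · rintro v f f' _ ⟨B, ⟨hBf, _, _⟩, ⟨hBf', N', hNf'⟩, hEq⟩
    have horb : ∀ k, f'^[N' + k] v = f^[k] (f'^[N'] v) := by
      intro k
      induction k with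
      | zero => rfl
      | succ k ih =>
        have h1 : N' + (k + 1) = (N' + k) + 1 := by omega
        have hxB : f^[k] (f'^[N'] v) ∈ B := by
          rw [← ih]; exact hNf' (N' + k) (Nat.le_add_right _ _)
        calc f'^[N' + (k + 1)] v = f' (f'^[N' + k] v) := by
              rw [h1, Function.iterate_succ_apply']
          _ = f' (f^[k] (f'^[N'] v)) := by rw [ih]
          _ = f (f^[k] (f'^[N'] v)) := (hEq hxB).symm
          _ = f^[k + 1] (f'^[N'] v) := (Function.iterate_succ_apply' f k _).symm
    have hB_sub : B ⊆ component f v := by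
      obtain ⟨U, _, a₀, ha₀, rfl⟩ := hBf
      exact (compIn_subset ha₀).trans Set.diff_subset
    have ha'C : SameComponent f (f'^[N'] v) v := hB_sub (hNf' N' le_rfl)
    have h1 : ancLine (v, f') ∈ A' ↔ ancLine (f'^[N'] v, f) ∈ A' := by
      rw [shift_invariant_mem_add hs (ancLine (v, f')) N']
      have he : (fun n => ancLine (v, f') (n + N')) = ancLine (f'^[N'] v, f) := by
        funext n
        show f'^[n + N'] v = f^[n] (f'^[N'] v)
        rw [Nat.add_comm n N']
        exact horb n
      rw [he]
    have h2 : ancLine (f'^[N'] v, f) ∈ A' ↔ ancLine (v, f) ∈ A' :=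
      anc_mem_iff_of_sameComponent hs ha'C
    exact ((h1.trans h2).symm : (ancLine (v, f) ∈ A' ↔ ancLine (v, f') ∈ A'))


section Meas
variable [MeasurableSpace G] [MeasurableSingletonClass G] [Countable G]

/-- Cylinder event. -/
def cyl (s : Finset G) (u : G → G) : Set (G → G) := {f | ∀ x ∈ s, f x = u x}

def cylSet (G : Type*) : Set (Set (G → G)) := {S | ∃ s u, S = cyl s u}

lemma measurableSet_cyl (s : Finset G) (u : G → G) : MeasurableSet (cyl s u) := by
  have : cyl s u = ⋂ x ∈ s, (fun f : G → G => f x) ⁻¹' {u x} := by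
    ext f; simp [cyl]
  rw [this]
  exact MeasurableSet.biInter s.countable_toSet fun x _ =>
    (measurable_pi_apply x) (measurableSet_singleton _)

lemma cyl_anti {s t : Finset G} (h : t ⊆ s) (u : G → G) : cyl s u ⊆ cyl t u :=
  fun f hf x hx => hf x (h hx)

lemma cyl_congr {s : Finset G} {u w : G → G} (h : ∀ x ∈ s, u x = w x) : cyl s u = cyl s w := by
  ext f
  exact ⟨fun hf x hx => (hf x hx).trans (h x hx), fun hf x hx => (hf x hx).trans (h x hx).symm⟩

lemma cyl_union [DecidableEq G] (a b : Finset G) (u : G → G) : cyl (a ∪ b) u = cyl a u ∩ cyl b u := by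
  ext f
  simp only [cyl, Set.mem_setOf_eq, Set.mem_inter_iff, Finset.mem_union]
  constructor
  · intro hf
    exact ⟨fun x hx => hf x (Or.inl hx), fun x hx => hf x (Or.inr hx)⟩
  · rintro ⟨h1, h2⟩ x hx
    rcases hx with hx | hx
    · exact h1 x hx
    · exact h2 x hx

lemma cyl_inter_disjoint [DecidableEq G] {a b : Finset G} (hab : Disjoint a b) (u w : G → G) :
    cyl a u ∩ cyl b w = cyl (a ∪ b) (fun x => if x ∈ a then u x else w x) := by
  ext f
  simp only [cyl, Set.mem_setOf_eq, Set.mem_inter_iff, Finset.mem_union]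
  constructor
  · rintro ⟨h1, h2⟩ x hx
    rcases hx with hx | hx
    · rw [if_pos hx]; exact h1 x hx
    · rw [if_neg (Finset.disjoint_right.mp hab hx)]; exact h2 x hx
  · intro hf
    constructor
    · intro x hx
      have := hf x (Or.inl hx); rwa [if_pos hx] at this
    · intro x hx
      have := hf x (Or.inr hx)
      rwa [if_neg (Finset.disjoint_right.mp hab hx)] at this

lemma isPiSystem_cyl : IsPiSystem (cylSet G) := by
  rintro S ⟨s, u, rfl⟩ T ⟨t, w, rfl⟩ ⟨f₀, hf₀u, hf₀w⟩
  classical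
  refine ⟨s ∪ t, fun x => if x ∈ s then u x else w x, ?_⟩
  ext f
  simp only [cyl, Set.mem_inter_iff, Set.mem_setOf_eq, Finset.mem_union]
  constructor
  · rintro ⟨h1, h2⟩ x hx
    rcases hx with hx | hx
    · rw [if_pos hx]; exact h1 x hx
    · by_cases hxs : x ∈ s
      · rw [if_pos hxs]; exact h1 x hxs
      · rw [if_neg hxs]; exact h2 x hx
  · intro hf
    constructor
    · intro x hx
      have := hf x (Or.inl hx); rwa [if_pos hx] at this
    · intro x hx
      have := hf x (Or.inr hx)
      by_cases hxs : x ∈ s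
      · rw [if_pos hxs] at this
        rw [this, ← hf₀u x hxs, hf₀w x hx]
      · rwa [if_neg hxs] at this

lemma gen_eq : (inferInstance : MeasurableSpace (G → G)) = .generateFrom (cylSet G) := by
  refine le_antisymm ?_ (MeasurableSpace.generateFrom_le ?_)
  · show (MeasurableSpace.pi : MeasurableSpace (G → G)) ≤ _
    rw [MeasurableSpace.pi_eq_generateFrom_projections]
    refine MeasurableSpace.generateFrom_le ?_
    rintro B ⟨x, A, -, rfl⟩
    have hB : Function.eval x ⁻¹' A = ⋃ y ∈ A, cyl {x} (fun _ => y) := by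
      ext f
      simp only [Set.mem_preimage, Function.eval, Set.mem_iUnion, cyl, Set.mem_setOf_eq,
        Finset.mem_singleton]
      constructor
      · intro hf; exact ⟨f x, hf, fun z hz => by rw [hz]⟩
      · rintro ⟨y, hy, hfy⟩
        have := hfy x rfl
        rwa [this]
    rw [hB]
    exact MeasurableSet.biUnion (Set.to_countable A) fun y _ =>
      MeasurableSpace.measurableSet_generateFrom ⟨{x}, fun _ => y, rfl⟩
  · rintro S ⟨s, u, rfl⟩
    exact measurableSet_cyl s u


-- ============ grafting ============

open scoped Classical in
noncomputable def graftN (E : Finset G) (v : G) (n : ℕ) (p : (G → G) × (G → G)) : G → G :=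
  fun x => if x ∈ E ∨ ∃ k, k ≤ n ∧ p.1^[k] v = x then p.1 x else p.2 x

open scoped Classical in
noncomputable def graft (E : Finset G) (v : G) (p : (G → G) × (G → G)) : G → G :=
  fun x => if x ∈ E ∨ ∃ k, p.1^[k] v = x then p.1 x else p.2 x

lemma graft_pos {E : Finset G} {v : G} {p : (G → G) × (G → G)} {x : G}
    (h : x ∈ E ∨ ∃ k, p.1^[k] v = x) : graft E v p x = p.1 x := by
  simp only [graft]
  exact if_pos h

lemma graft_neg {E : Finset G} {v : G} {p : (G → G) × (G → G)} {x : G}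
    (h : ¬(x ∈ E ∨ ∃ k, p.1^[k] v = x)) : graft E v p x = p.2 x := by
  simp only [graft]
  exact if_neg h

lemma graftN_pos {E : Finset G} {v : G} {n : ℕ} {p : (G → G) × (G → G)} {x : G}
    (h : x ∈ E ∨ ∃ k, k ≤ n ∧ p.1^[k] v = x) : graftN E v n p x = p.1 x := by
  simp only [graftN]
  exact if_pos h

lemma graftN_neg {E : Finset G} {v : G} {n : ℕ} {p : (G → G) × (G → G)} {x : G}
    (h : ¬(x ∈ E ∨ ∃ k, k ≤ n ∧ p.1^[k] v = x)) : graftN E v n p x = p.2 x := by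
  simp only [graftN]
  exact if_neg h

lemma graft_orbit (E : Finset G) (v : G) (p : (G → G) × (G → G)) (n : ℕ) :
    (graft E v p)^[n] v = p.1^[n] v := by
  induction n with
  | zero => rfl
  | succ n ih =>
    rw [Function.iterate_succ_apply', ih, graft_pos (Or.inr ⟨n, rfl⟩)]
    exact (Function.iterate_succ_apply' p.1 n v).symm

lemma measurable_graftN (E : Finset G) (v : G) (n : ℕ) :
    Measurable fun p : (G → G) × (G → G) => graftN E v n p := by
  rw [measurable_pi_iff]
  intro x
  have hS : MeasurableSet {p : (G → G) × (G → G) | x ∈ E ∨ ∃ k, k ≤ n ∧ p.1^[k] v = x} := by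
    by_cases hx : x ∈ E
    · have : {p : (G → G) × (G → G) | x ∈ E ∨ ∃ k, k ≤ n ∧ p.1^[k] v = x} = Set.univ := by
        ext p; simp [hx]
      rw [this]; exact MeasurableSet.univ
    · have : {p : (G → G) × (G → G) | x ∈ E ∨ ∃ k, k ≤ n ∧ p.1^[k] v = x}
          = ⋃ k, ⋃ (_ : k ≤ n), (fun p : (G → G) × (G → G) => p.1^[k] v) ⁻¹' {x} := by
        ext p; simp [hx]
      rw [this]
      exact MeasurableSet.iUnion fun k => MeasurableSet.iUnion fun _ =>
        ((measurable_iter v k).comp measurable_fst) (measurableSet_singleton x)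
  exact Measurable.ite hS ((measurable_pi_apply x).comp measurable_fst)
    ((measurable_pi_apply x).comp measurable_snd)

lemma measurable_graft (E : Finset G) (v : G) :
    Measurable fun p : (G → G) × (G → G) => graft E v p := by
  rw [measurable_pi_iff]
  intro x
  have hS : MeasurableSet {p : (G → G) × (G → G) | x ∈ E ∨ ∃ k, p.1^[k] v = x} := by
    by_cases hx : x ∈ E
    · have : {p : (G → G) × (G → G) | x ∈ E ∨ ∃ k, p.1^[k] v = x} = Set.univ := by
        ext p; simp [hx]
      rw [this]; exact MeasurableSet.univ
    · have : {p : (G → G) × (G → G) | x ∈ E ∨ ∃ k, p.1^[k] v = x}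
          = ⋃ k, (fun p : (G → G) × (G → G) => p.1^[k] v) ⁻¹' {x} := by
        ext p; simp [hx]
      rw [this]
      exact MeasurableSet.iUnion fun k =>
        ((measurable_iter v k).comp measurable_fst) (measurableSet_singleton x)
  exact Measurable.ite hS ((measurable_pi_apply x).comp measurable_fst)
    ((measurable_pi_apply x).comp measurable_snd)

-- ============ trajectory cells ============

def trajCell (v : G) (n : ℕ) (y : Fin (n + 1) → G) : Set (G → G) :=
  {f | ∀ k : Fin (n + 1), f^[(k : ℕ)] v = y k}

lemma measurableSet_trajCell (v : G) (n : ℕ) (y : Fin (n + 1) → G) :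
    MeasurableSet (trajCell v n y) := by
  have : trajCell v n y = ⋂ k : Fin (n + 1), (fun f : G → G => f^[(k : ℕ)] v) ⁻¹' {y k} := by
    ext f; simp [trajCell]
  rw [this]
  exact MeasurableSet.iInter fun k => (measurable_iter v k) (measurableSet_singleton _)

lemma trajCell_disjoint (v : G) (n : ℕ) :
    Pairwise (Function.onFun Disjoint (trajCell v n)) := by
  intro y y' hyy'
  rw [Function.onFun, Set.disjoint_left]
  intro f hf hf'
  exact hyy' (funext fun k => (hf k).symm.trans (hf' k))

lemma trajCell_cover (v : G) (n : ℕ) (f : G → G) :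
    f ∈ trajCell v n (fun k : Fin (n + 1) => f^[(k : ℕ)] v) := fun _ => rfl

def rySet [DecidableEq G] (E : Finset G) {n : ℕ} (y : Fin (n + 1) → G) : Finset G :=
  E ∪ Finset.image y Finset.univ

lemma cell_identity [DecidableEq G] {K : G → Measure G} {μ : Measure (G → G)}
    (hμ : IsCMTLaw K μ) (E : Finset G) (v : G) (n : ℕ) (s : Finset G) (u : G → G)
    (y : Fin (n + 1) → G) :
    μ (trajCell v n y ∩ cyl (s ∩ rySet E y) u) * μ (cyl (s \ rySet E y) u)
      = μ (trajCell v n y ∩ cyl s u) := by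
  have hμ' : ∀ (t : Finset G) (w : G → G), μ (cyl t w) = ∏ x ∈ t, K x {w x} := fun t w => hμ t w
  rcases Set.eq_empty_or_nonempty (trajCell v n y ∩ cyl (s ∩ rySet E y) u) with hX | hX
  · have h0 : μ (trajCell v n y ∩ cyl s u) = 0 :=
      measure_mono_null
        (Set.inter_subset_inter_right _ (cyl_anti Finset.inter_subset_left u))
        (by rw [hX]; exact measure_empty)
    rw [hX, measure_empty, zero_mul, h0]
  · obtain ⟨f₀, hf₀T, hf₀c⟩ := hX
    have hy0 : y 0 = v := by
      have h0 := hf₀T 0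
      simpa using h0.symm
    set Dm : Finset G := Finset.image (fun k : Fin n => y k.castSucc) Finset.univ with hDm
    have hT₀ : ∀ f ∈ trajCell v n y, ∀ k : Fin n, f (y k.castSucc) = y k.succ := by
      intro f hf k
      have h1 := hf k.castSucc
      have h2 := hf k.succ
      rw [← h1, ← h2]
      have hc : ((k.succ : Fin (n + 1)) : ℕ) = (k.castSucc : ℕ) + 1 := by
        simp [Fin.val_succ, Fin.coe_castSucc]
      rw [hc]
      exact (Function.iterate_succ_apply' f _ v).symm
    have hcellEq : trajCell v n y = cyl Dm f₀ := by
      ext f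
      constructor
      · intro hf x hx
        obtain ⟨k, -, rfl⟩ := Finset.mem_image.mp hx
        rw [hT₀ f hf k, hT₀ f₀ hf₀T k]
      · intro hf
        have aux : ∀ j (hj : j < n + 1), f^[j] v = y ⟨j, hj⟩ := by
          intro j
          induction j with
          | zero =>
            intro hj
            have h00 : (⟨0, hj⟩ : Fin (n + 1)) = 0 := rfl
            rw [h00, Function.iterate_zero_apply]
            exact hy0.symm
          | succ j ihj =>
            intro hj
            have hjn : j < n := by omega
            have hj1 : j < n + 1 := by omega
            have hx : y (⟨j, hjn⟩ : Fin n).castSucc ∈ Dm :=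
              Finset.mem_image_of_mem _ (Finset.mem_univ _)
            have hk : (⟨j, hj1⟩ : Fin (n + 1)) = (⟨j, hjn⟩ : Fin n).castSucc := rfl
            rw [Function.iterate_succ_apply', ihj hj1, hk, hf _ hx, hT₀ f₀ hf₀T ⟨j, hjn⟩]
            rfl
        intro k
        have := aux (k : ℕ) k.isLt
        simpa using this
    have hucongr : cyl (s ∩ rySet E y) u = cyl (s ∩ rySet E y) f₀ :=
      cyl_congr fun x hx => (hf₀c x hx).symm
    have hDmRy : Dm ⊆ rySet E y := by
      intro x hx
      obtain ⟨k, -, rfl⟩ := Finset.mem_image.mp hx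
      exact Finset.mem_union_right _ (Finset.mem_image_of_mem _ (Finset.mem_univ _))
    have hdisj : Disjoint (Dm ∪ s ∩ rySet E y) (s \ rySet E y) := by
      rw [Finset.disjoint_left]
      intro x hx hx'
      have hxRy : x ∈ rySet E y := by
        rcases Finset.mem_union.mp hx with h | h
        · exact hDmRy h
        · exact (Finset.mem_inter.mp h).2
      exact (Finset.mem_sdiff.mp hx').2 hxRy
    have hXeq : trajCell v n y ∩ cyl (s ∩ rySet E y) u = cyl (Dm ∪ s ∩ rySet E y) f₀ := by
      rw [hcellEq, hucongr, cyl_union]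
    have hseq : s ∩ rySet E y ∪ s \ rySet E y = s := by
      rw [Finset.union_comm]
      exact Finset.sdiff_union_inter s (rySet E y)
    have hssplit : cyl s u = cyl (s ∩ rySet E y) u ∩ cyl (s \ rySet E y) u := by
      rw [← cyl_union, hseq]
    have hRHSeq : trajCell v n y ∩ cyl s u
        = cyl ((Dm ∪ s ∩ rySet E y) ∪ (s \ rySet E y))
            (fun x => if x ∈ Dm ∪ s ∩ rySet E y then f₀ x else u x) := by
      rw [hssplit, ← Set.inter_assoc, hXeq, cyl_inter_disjoint hdisj]
    rw [hXeq, hRHSeq, hμ', hμ', hμ', Finset.prod_union hdisj]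
    congr 1
    · exact Finset.prod_congr rfl fun x hx => by rw [if_pos hx]
    · refine Finset.prod_congr rfl fun x hx => ?_
      rw [if_neg (Finset.disjoint_right.mp hdisj hx)]


lemma wsetN_eq {v : G} {n : ℕ} {y : Fin (n + 1) → G} {f : G → G} (hf : f ∈ trajCell v n y)
    (x : G) : (∃ k, k ≤ n ∧ f^[k] v = x) ↔ ∃ k : Fin (n + 1), y k = x := by
  constructor
  · rintro ⟨k, hk, rfl⟩
    exact ⟨⟨k, by omega⟩, (hf ⟨k, by omega⟩).symm⟩
  · rintro ⟨k, rfl⟩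
    exact ⟨(k : ℕ), by omega, hf k⟩

lemma graftN_cell_eq [DecidableEq G] (E : Finset G) (v : G) (n : ℕ) (s : Finset G) (u : G → G)
    (y : Fin (n + 1) → G) :
    (fun p : (G → G) × (G → G) => graftN E v n p) ⁻¹' cyl s u ∩ trajCell v n y ×ˢ Set.univ
      = (trajCell v n y ∩ cyl (s ∩ rySet E y) u) ×ˢ cyl (s \ rySet E y) u := by
  ext p
  simp only [Set.mem_inter_iff, Set.mem_preimage, Set.mem_prod, Set.mem_univ, and_true]
  constructor
  · rintro ⟨hcyl, hT⟩
    refine ⟨⟨hT, ?_⟩, ?_⟩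
    · intro x hx
      obtain ⟨hxs, hxRy⟩ := Finset.mem_inter.mp hx
      have hcond : x ∈ E ∨ ∃ k, k ≤ n ∧ p.1^[k] v = x := by
        rcases Finset.mem_union.mp hxRy with h | h
        · exact Or.inl h
        · obtain ⟨k, -, rfl⟩ := Finset.mem_image.mp h
          exact Or.inr ((wsetN_eq hT _).mpr ⟨k, rfl⟩)
      rw [← graftN_pos hcond]
      exact hcyl x hxs
    · intro x hx
      obtain ⟨hxs, hxRy⟩ := Finset.mem_sdiff.mp hx
      have hcond : ¬(x ∈ E ∨ ∃ k, k ≤ n ∧ p.1^[k] v = x) := by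
        rintro (h | h)
        · exact hxRy (Finset.mem_union_left _ h)
        · obtain ⟨k, rfl⟩ := (wsetN_eq hT x).mp h
          exact hxRy (Finset.mem_union_right _ (Finset.mem_image_of_mem _ (Finset.mem_univ _)))
      rw [← graftN_neg hcond]
      exact hcyl x hxs
  · rintro ⟨⟨hT, h1⟩, h2⟩
    refine ⟨?_, hT⟩
    intro x hxs
    by_cases hxRy : x ∈ rySet E y
    · have hcond : x ∈ E ∨ ∃ k, k ≤ n ∧ p.1^[k] v = x := by
        rcases Finset.mem_union.mp hxRy with h | h
        · exact Or.inl h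
        · obtain ⟨k, -, rfl⟩ := Finset.mem_image.mp h
          exact Or.inr ((wsetN_eq hT _).mpr ⟨k, rfl⟩)
      rw [graftN_pos hcond]
      exact h1 x (Finset.mem_inter.mpr ⟨hxs, hxRy⟩)
    · have hcond : ¬(x ∈ E ∨ ∃ k, k ≤ n ∧ p.1^[k] v = x) := by
        rintro (h | h)
        · exact hxRy (Finset.mem_union_left _ h)
        · obtain ⟨k, rfl⟩ := (wsetN_eq hT x).mp h
          exact hxRy (Finset.mem_union_right _ (Finset.mem_image_of_mem _ (Finset.mem_univ _)))
      rw [graftN_neg hcond]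
      exact h2 x (Finset.mem_sdiff.mpr ⟨hxs, hxRy⟩)

lemma law_graftN [DecidableEq G] {K : G → Measure G} {μ : Measure (G → G)}
    [SFinite μ] (hμ : IsCMTLaw K μ) (E : Finset G) (v : G) (n : ℕ) (s : Finset G) (u : G → G) :
    (μ.prod μ) ((fun p : (G → G) × (G → G) => graftN E v n p) ⁻¹' cyl s u) = μ (cyl s u) := by
  have hd : Pairwise (Function.onFun Disjoint fun y : Fin (n + 1) → G =>
      (fun p : (G → G) × (G → G) => graftN E v n p) ⁻¹' cyl s u ∩ trajCell v n y ×ˢ Set.univ) := by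
    intro y y' hyy'
    exact Set.disjoint_left.mpr fun p hp hp' =>
      Set.disjoint_left.mp (trajCell_disjoint v n hyy') hp.2.1 hp'.2.1
  have hm : ∀ y : Fin (n + 1) → G,
      MeasurableSet ((fun p : (G → G) × (G → G) => graftN E v n p) ⁻¹' cyl s u
        ∩ trajCell v n y ×ˢ Set.univ) := by
    intro y
    rw [graftN_cell_eq]
    exact ((measurableSet_trajCell v n y).inter (measurableSet_cyl _ u)).prod
      (measurableSet_cyl _ u)
  have hcover : (fun p : (G → G) × (G → G) => graftN E v n p) ⁻¹' cyl s u
      = ⋃ y : Fin (n + 1) → G,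
          ((fun p : (G → G) × (G → G) => graftN E v n p) ⁻¹' cyl s u
            ∩ trajCell v n y ×ˢ Set.univ) := by
    ext p
    simp only [Set.mem_iUnion, Set.mem_inter_iff, Set.mem_prod, Set.mem_univ, and_true]
    constructor
    · intro hp
      exact ⟨fun k => p.1^[(k : ℕ)] v, hp, trajCell_cover v n p.1⟩
    · rintro ⟨y, hp, -⟩; exact hp
  have hterm : ∀ y : Fin (n + 1) → G,
      (μ.prod μ) ((fun p : (G → G) × (G → G) => graftN E v n p) ⁻¹' cyl s u
        ∩ trajCell v n y ×ˢ Set.univ) = μ (trajCell v n y ∩ cyl s u) := by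
    intro y
    rw [graftN_cell_eq, Measure.prod_prod, cell_identity hμ E v n s u y]
  have hd2 : Pairwise (Function.onFun Disjoint fun y : Fin (n + 1) → G =>
      trajCell v n y ∩ cyl s u) := by
    intro y y' hyy'
    exact Set.disjoint_left.mpr fun f hf hf' =>
      Set.disjoint_left.mp (trajCell_disjoint v n hyy') hf.1 hf'.1
  have hcover2 : cyl s u = ⋃ y : Fin (n + 1) → G, (trajCell v n y ∩ cyl s u) := by
    ext f
    simp only [Set.mem_iUnion, Set.mem_inter_iff]
    constructor
    · intro hf
      exact ⟨fun k => f^[(k : ℕ)] v, trajCell_cover v n f, hf⟩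
    · rintro ⟨y, -, hf⟩; exact hf
  have step1 : (μ.prod μ) ((fun p : (G → G) × (G → G) => graftN E v n p) ⁻¹' cyl s u)
      = ∑' y : Fin (n + 1) → G, (μ.prod μ)
          ((fun p : (G → G) × (G → G) => graftN E v n p) ⁻¹' cyl s u
            ∩ trajCell v n y ×ˢ Set.univ) := by
    conv_lhs => rw [hcover]
    exact measure_iUnion hd hm
  have step3 : μ (cyl s u) = ∑' y : Fin (n + 1) → G, μ (trajCell v n y ∩ cyl s u) := by
    conv_lhs => rw [hcover2]
    exact measure_iUnion hd2 fun y =>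
      (measurableSet_trajCell v n y).inter (measurableSet_cyl s u)
  rw [step1, tsum_congr hterm, ← step3]

lemma law_graft_cyl [DecidableEq G] {K : G → Measure G} {μ : Measure (G → G)}
    [IsProbabilityMeasure μ] (hμ : IsCMTLaw K μ) (E : Finset G) (v : G) (s : Finset G)
    (u : G → G) :
    (μ.prod μ) ((fun p : (G → G) × (G → G) => graft E v p) ⁻¹' cyl s u) = μ (cyl s u) := by
  have hmeasN : ∀ n : ℕ,
      MeasurableSet ((fun p : (G → G) × (G → G) => graftN E v n p) ⁻¹' cyl s u) :=
    fun n => (measurable_graftN E v n) (measurableSet_cyl s u)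
  have hmeas : MeasurableSet ((fun p : (G → G) × (G → G) => graft E v p) ⁻¹' cyl s u) :=
    (measurable_graft E v) (measurableSet_cyl s u)
  have hptwise : ∀ p : (G → G) × (G → G), ∀ᶠ n : ℕ in Filter.atTop,
      ((fun p : (G → G) × (G → G) => graftN E v n p) ⁻¹' cyl s u).indicator
        (1 : ((G → G) × (G → G)) → ℝ≥0∞) p
      = ((fun p : (G → G) × (G → G) => graft E v p) ⁻¹' cyl s u).indicator
          (1 : ((G → G) × (G → G)) → ℝ≥0∞) p := by
    intro p
    have hx : ∀ x : G, ∀ᶠ n : ℕ in Filter.atTop, graftN E v n p x = graft E v p x := by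
      intro x
      by_cases hex : ∃ k, p.1^[k] v = x
      · obtain ⟨k, hk⟩ := hex
        refine Filter.eventually_atTop.mpr ⟨k, fun n hn => ?_⟩
        rw [graftN_pos (Or.inr ⟨k, hn, hk⟩), graft_pos (Or.inr ⟨k, hk⟩)]
      · refine Filter.Eventually.of_forall fun n => ?_
        by_cases hE : x ∈ E
        · rw [graftN_pos (Or.inl hE), graft_pos (Or.inl hE)]
        · have hc1 : ¬(x ∈ E ∨ ∃ k, k ≤ n ∧ p.1^[k] v = x) := by
            rintro (h | ⟨k, -, hk⟩)
            · exact hE h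
            · exact hex ⟨k, hk⟩
          have hc2 : ¬(x ∈ E ∨ ∃ k, p.1^[k] v = x) := by
            rintro (h | h)
            · exact hE h
            · exact hex h
          rw [graftN_neg hc1, graft_neg hc2]
    have hall : ∀ᶠ n : ℕ in Filter.atTop, ∀ x ∈ s, graftN E v n p x = graft E v p x := by
      rw [Filter.eventually_all_finset]
      exact fun x _ => hx x
    refine hall.mono fun n hn => ?_
    have hiff : (graftN E v n p ∈ cyl s u) ↔ (graft E v p ∈ cyl s u) := by
      constructor <;> intro h x hxs
      · rw [← hn x hxs]; exact h x hxs
      · rw [hn x hxs]; exact h x hxs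
    by_cases hmem : graft E v p ∈ cyl s u
    · have h1 : p ∈ (fun p : (G → G) × (G → G) => graftN E v n p) ⁻¹' cyl s u := hiff.mpr hmem
      have h2 : p ∈ (fun p : (G → G) × (G → G) => graft E v p) ⁻¹' cyl s u := hmem
      rw [Set.indicator_of_mem h1, Set.indicator_of_mem h2]
    · have h1 : p ∉ (fun p : (G → G) × (G → G) => graftN E v n p) ⁻¹' cyl s u :=
        fun hc => hmem (hiff.mp hc)
      have h2 : p ∉ (fun p : (G → G) × (G → G) => graft E v p) ⁻¹' cyl s u := hmem
      rw [Set.indicator_of_notMem h1, Set.indicator_of_notMem h2]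
  have hbound : ∀ n : ℕ, ∀ᵐ p ∂(μ.prod μ),
      ((fun p : (G → G) × (G → G) => graftN E v n p) ⁻¹' cyl s u).indicator
        (1 : ((G → G) × (G → G)) → ℝ≥0∞) p ≤ (1 : ((G → G) × (G → G)) → ℝ≥0∞) p := by
    intro n
    refine Filter.Eventually.of_forall fun p => ?_
    by_cases h : p ∈ (fun p : (G → G) × (G → G) => graftN E v n p) ⁻¹' cyl s u
    · rw [Set.indicator_of_mem h]
    · rw [Set.indicator_of_notMem h]; exact zero_le
  have hfin : ∫⁻ p, (1 : ((G → G) × (G → G)) → ℝ≥0∞) p ∂(μ.prod μ) ≠ ⊤ := by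
    simp
  have hlim : ∀ᵐ p ∂(μ.prod μ), Filter.Tendsto (fun n : ℕ =>
      ((fun p : (G → G) × (G → G) => graftN E v n p) ⁻¹' cyl s u).indicator
        (1 : ((G → G) × (G → G)) → ℝ≥0∞) p) Filter.atTop
      (nhds (((fun p : (G → G) × (G → G) => graft E v p) ⁻¹' cyl s u).indicator
        (1 : ((G → G) × (G → G)) → ℝ≥0∞) p)) :=
    Filter.Eventually.of_forall fun p =>
      tendsto_const_nhds.congr' ((hptwise p).mono fun n hn => hn.symm)
  have hconv := MeasureTheory.tendsto_lintegral_of_dominated_convergence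
      (μ := μ.prod μ)
      (F := fun (n : ℕ) (p : (G → G) × (G → G)) =>
        ((fun p : (G → G) × (G → G) => graftN E v n p) ⁻¹' cyl s u).indicator
          (1 : ((G → G) × (G → G)) → ℝ≥0∞) p)
      (f := fun p : (G → G) × (G → G) =>
        ((fun p : (G → G) × (G → G) => graft E v p) ⁻¹' cyl s u).indicator
          (1 : ((G → G) × (G → G)) → ℝ≥0∞) p)
      (1 : ((G → G) × (G → G)) → ℝ≥0∞)
      (fun n => measurable_const.indicator (hmeasN n))
      hbound hfin hlim
  have hconst : (fun n : ℕ => ∫⁻ p, ((fun p : (G → G) × (G → G) => graftN E v n p) ⁻¹' cyl s u).indicator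
      (1 : ((G → G) × (G → G)) → ℝ≥0∞) p ∂(μ.prod μ)) = fun _ : ℕ => μ (cyl s u) := by
    funext n
    rw [lintegral_indicator_one (hmeasN n)]
    exact law_graftN hμ E v n s u
  rw [hconst] at hconv
  have h2 := tendsto_nhds_unique tendsto_const_nhds hconv
  have h3 : ∫⁻ (a : (G → G) × (G → G)),
      ((fun p : (G → G) × (G → G) => graft E v p) ⁻¹' cyl s u).indicator
        (1 : ((G → G) × (G → G)) → ℝ≥0∞) a ∂(μ.prod μ)
      = (μ.prod μ) ((fun p : (G → G) × (G → G) => graft E v p) ⁻¹' cyl s u) :=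
    lintegral_indicator_one hmeas
  exact h3.symm.trans h2.symm

lemma law_graft [DecidableEq G] {K : G → Measure G} {μ : Measure (G → G)}
    [IsProbabilityMeasure μ] (hμ : IsCMTLaw K μ) (E : Finset G) (v : G) :
    Measure.map (fun p : (G → G) × (G → G) => graft E v p) (μ.prod μ) = μ := by
  haveI := MeasureTheory.Measure.isProbabilityMeasure_map
    (μ := μ.prod μ) (measurable_graft E v).aemeasurable
  refine MeasureTheory.ext_of_generate_finite (cylSet G) gen_eq isPiSystem_cyl ?_ ?_
  · rintro S ⟨t, w, rfl⟩
    rw [Measure.map_apply (measurable_graft E v) (measurableSet_cyl t w)]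
    exact law_graft_cyl hμ E v t w
  · rw [Measure.map_apply (measurable_graft E v) MeasurableSet.univ]
    simp


-- ============ approximation by finitely-determined sets ============

def DetBy (C : Set (G → G)) (E : Finset G) : Prop :=
  ∀ f g : G → G, (∀ x ∈ E, f x = g x) → (f ∈ C ↔ g ∈ C)

lemma DetBy.measurableSet {C : Set (G → G)} {E : Finset G} (h : DetBy C E) :
    MeasurableSet C := by
  have hrep : C = ⋃ u : (↑E : Set G) → G,
      {f : G → G | (∀ x : (↑E : Set G), f ↑x = u x) ∧ ∃ g ∈ C, ∀ x : (↑E : Set G), g ↑x = u x} := by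
    ext f
    simp only [Set.mem_iUnion, Set.mem_setOf_eq]
    constructor
    · intro hf
      exact ⟨fun x => f ↑x, fun _ => rfl, f, hf, fun _ => rfl⟩
    · rintro ⟨u, hfu, g, hgC, hgu⟩
      refine (h f g fun x hx => ?_).mpr hgC
      rw [hfu ⟨x, hx⟩, hgu ⟨x, hx⟩]
  rw [hrep]
  refine MeasurableSet.iUnion fun u => ?_
  have hsplit : {f : G → G | (∀ x : (↑E : Set G), f ↑x = u x)
        ∧ ∃ g ∈ C, ∀ x : (↑E : Set G), g ↑x = u x}
      = (⋂ x : (↑E : Set G), (fun f : G → G => f ↑x) ⁻¹' {u x})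
        ∩ {_f : G → G | ∃ g ∈ C, ∀ x : (↑E : Set G), g ↑x = u x} := by
    ext f
    simp only [Set.mem_setOf_eq, Set.mem_inter_iff, Set.mem_iInter, Set.mem_preimage,
      Set.mem_singleton_iff]
  rw [hsplit]
  exact MeasurableSet.inter
    (MeasurableSet.iInter fun x => (measurable_pi_apply _) (measurableSet_singleton _))
    (MeasurableSet.const _)

lemma exists_detBy_approx {μ : Measure (G → G)} [IsProbabilityMeasure μ]
    (S : Set (G → G)) (hS : MeasurableSet S) :
    ∀ ε : ℝ≥0∞, ε ≠ 0 → ∃ (E : Finset G) (C : Set (G → G)), DetBy C E ∧ μ (symmDiff S C) ≤ ε := by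
  classical
  set P : Set (G → G) → Prop := fun S =>
    MeasurableSet S ∧ ∀ ε : ℝ≥0∞, ε ≠ 0 → ∃ (E : Finset G) (C : Set (G → G)),
      DetBy C E ∧ μ (symmDiff S C) ≤ ε with hP
  have hPempty : P ∅ :=
    ⟨MeasurableSet.empty, fun ε _ => ⟨∅, ∅, fun _ _ _ => Iff.rfl, by simp⟩⟩
  have hPcompl : ∀ T, P T → P Tᶜ := by
    rintro T ⟨hTm, hTa⟩
    refine ⟨hTm.compl, fun ε hε => ?_⟩
    obtain ⟨E, C, hDet, hle⟩ := hTa ε hε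
    exact ⟨E, Cᶜ, fun f g hfg => not_iff_not.mpr (hDet f g hfg),
      by rwa [compl_symmDiff_compl]⟩
  have hPunion : ∀ F : ℕ → Set (G → G), (∀ i, P (F i)) → P (⋃ i, F i) := by
    intro F hF
    refine ⟨MeasurableSet.iUnion fun i => (hF i).1, fun ε hε => ?_⟩
    set T : ℕ → Set (G → G) := fun n => (⋃ i, F i) \ Set.accumulate F n with hT
    have hTanti : Antitone T := fun m n hmn =>
      Set.diff_subset_diff_right (Set.monotone_accumulate hmn)
    have hAccm : ∀ n, MeasurableSet (Set.accumulate F n) := by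
      intro n
      refine MeasurableSet.biUnion (Set.to_countable _) fun i _ => (hF i).1
    have hTm : ∀ n, NullMeasurableSet (T n) μ := fun n =>
      ((MeasurableSet.iUnion fun i => (hF i).1).diff (hAccm n)).nullMeasurableSet
    have hInter : ⋂ n, T n = ∅ := by
      rw [hT]
      rw [← Set.diff_iUnion, Set.iUnion_accumulate, Set.diff_self]
    have htend : Filter.Tendsto (fun n => μ (T n)) Filter.atTop (nhds 0) := by
      have h1 := tendsto_measure_iInter_atTop hTm hTanti ⟨0, measure_ne_top μ _⟩
      rw [hInter, measure_empty] at h1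
      exact h1
    have hhalf : (0 : ℝ≥0∞) < ε / 2 := ENNReal.half_pos hε
    obtain ⟨n, hn⟩ := (htend.eventually_lt_const hhalf).exists
    set δ : ℝ≥0∞ := ε / 2 / ((n + 1 : ℕ) : ℝ≥0∞) with hδ
    have hδ0 : δ ≠ 0 := by
      simp only [hδ, ne_eq, ENNReal.div_eq_zero_iff, not_or]
      exact ⟨⟨hε, ENNReal.ofNat_ne_top⟩, ENNReal.natCast_ne_top _⟩
    choose Es Cs hDet hle using fun i : ℕ => (hF i).2 δ hδ0
    refine ⟨(Finset.range (n + 1)).biUnion Es, ⋃ i ∈ Finset.range (n + 1), Cs i, ?_, ?_⟩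
    · intro f g hfg
      have hiff : ∀ i ∈ Finset.range (n + 1), (f ∈ Cs i ↔ g ∈ Cs i) := fun i hi =>
        hDet i f g fun x hx => hfg x (Finset.mem_biUnion.mpr ⟨i, hi, hx⟩)
      constructor <;> intro hmem
      · obtain ⟨i, hi, hfi⟩ := Set.mem_iUnion₂.mp hmem
        exact Set.mem_iUnion₂.mpr ⟨i, hi, (hiff i hi).mp hfi⟩
      · obtain ⟨i, hi, hfi⟩ := Set.mem_iUnion₂.mp hmem
        exact Set.mem_iUnion₂.mpr ⟨i, hi, (hiff i hi).mpr hfi⟩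
    · have hsub : symmDiff (⋃ i, F i) (⋃ i ∈ Finset.range (n + 1), Cs i)
          ⊆ T n ∪ ⋃ i ∈ Finset.range (n + 1), symmDiff (F i) (Cs i) := by
        intro f hf
        rw [Set.mem_symmDiff] at hf
        rcases hf with ⟨hfU, hfC⟩ | ⟨hfC, hfU⟩
        · by_cases hacc : f ∈ Set.accumulate F n
          · obtain ⟨i, hi, hfi⟩ := Set.mem_accumulate.mp hacc
            have hir : i ∈ Finset.range (n + 1) := Finset.mem_range.mpr (by omega)
            refine Or.inr (Set.mem_iUnion₂.mpr ⟨i, hir, ?_⟩)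
            rw [Set.mem_symmDiff]
            exact Or.inl ⟨hfi, fun hc => hfC (Set.mem_iUnion₂.mpr ⟨i, hir, hc⟩)⟩
          · exact Or.inl ⟨hfU, hacc⟩
        · obtain ⟨i, hi, hfi⟩ := Set.mem_iUnion₂.mp hfC
          refine Or.inr (Set.mem_iUnion₂.mpr ⟨i, hi, ?_⟩)
          rw [Set.mem_symmDiff]
          exact Or.inr ⟨hfi, fun hc => hfU (Set.mem_iUnion.mpr ⟨i, hc⟩)⟩
      calc μ (symmDiff (⋃ i, F i) (⋃ i ∈ Finset.range (n + 1), Cs i))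
          ≤ μ (T n ∪ ⋃ i ∈ Finset.range (n + 1), symmDiff (F i) (Cs i)) := measure_mono hsub
        _ ≤ μ (T n) + μ (⋃ i ∈ Finset.range (n + 1), symmDiff (F i) (Cs i)) :=
            measure_union_le _ _
        _ ≤ ε / 2 + ∑ i ∈ Finset.range (n + 1), μ (symmDiff (F i) (Cs i)) :=
            add_le_add hn.le (measure_biUnion_finset_le _ _)
        _ ≤ ε / 2 + ∑ _i ∈ Finset.range (n + 1), δ :=
            add_le_add le_rfl (Finset.sum_le_sum fun i _ => hle i)
        _ ≤ ε / 2 + ε / 2 := by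
            refine add_le_add le_rfl ?_
            rw [Finset.sum_const, Finset.card_range, nsmul_eq_mul]
            exact ENNReal.mul_div_le
        _ = ε := ENNReal.add_halves ε
  let m' : MeasurableSpace (G → G) := ⟨P, hPempty, hPcompl, hPunion⟩
  have hgen : MeasurableSpace.generateFrom (cylSet G) ≤ m' := by
    refine MeasurableSpace.generateFrom_le ?_
    rintro Sc ⟨s, u, rfl⟩
    refine ⟨measurableSet_cyl s u, fun ε _ => ⟨s, cyl s u, ?_, by simp [symmDiff_self]⟩⟩
    intro f g hfg
    constructor <;> intro h x hx
    · rw [← hfg x hx]; exact h x hx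
    · rw [hfg x hx]; exact h x hx
  have hmem : m'.MeasurableSet' S := hgen _ (by rw [← gen_eq]; exact hS)
  exact hmem.2

-- ============ the path functional and the key coupling lemma ============

open scoped Classical in
noncomputable def Tg (ω : ℕ → G) (g : G → G) : G → G :=
  fun x => if h : ∃ n, ω n = x then ω (Nat.find h + 1) else g x

lemma Tg_anc (v : G) (f g : G → G) : Tg (ancLine (v, f)) g = graft ∅ v (f, g) := by
  classical
  funext x
  by_cases h : ∃ n, f^[n] v = x
  · have h' : ∃ n, ancLine (v, f) n = x := h
    have hval : Tg (ancLine (v, f)) g x = ancLine (v, f) (Nat.find h' + 1) := dif_pos h'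
    have hg : graft ∅ v (f, g) x = f x := graft_pos (Or.inr h)
    rw [hval, hg]
    have hspec : f^[Nat.find h'] v = x := Nat.find_spec h'
    show f^[Nat.find h' + 1] v = f x
    rw [Function.iterate_succ_apply', hspec]
  · have h' : ¬ ∃ n, ancLine (v, f) n = x := h
    have hval : Tg (ancLine (v, f)) g x = g x := dif_neg h'
    have hc : ¬(x ∈ (∅ : Finset G) ∨ ∃ k, (f, g).1^[k] v = x) := by
      rintro (hc | hc)
      · exact absurd hc (Finset.notMem_empty x)
      · exact h hc
    rw [hval, graft_neg hc]

lemma measurable_Tg : Measurable fun q : (ℕ → G) × (G → G) => Tg q.1 q.2 := by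
  classical
  rw [measurable_pi_iff]
  intro x
  apply measurable_to_countable'
  intro z
  have hdecomp : (fun q : (ℕ → G) × (G → G) => Tg q.1 q.2 x) ⁻¹' {z}
      = (⋃ n : ℕ, ((fun q : (ℕ → G) × (G → G) => q.1 n) ⁻¹' {x}
          ∩ (⋂ k : ℕ, ⋂ (_ : k < n), ((fun q : (ℕ → G) × (G → G) => q.1 k) ⁻¹' {x})ᶜ)
          ∩ (fun q : (ℕ → G) × (G → G) => q.1 (n + 1)) ⁻¹' {z}))
        ∪ ((⋂ n : ℕ, ((fun q : (ℕ → G) × (G → G) => q.1 n) ⁻¹' {x})ᶜ)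
            ∩ (fun q : (ℕ → G) × (G → G) => q.2 x) ⁻¹' {z}) := by
    ext q
    simp only [Set.mem_preimage, Set.mem_singleton_iff, Set.mem_union, Set.mem_iUnion,
      Set.mem_inter_iff, Set.mem_iInter, Set.mem_compl_iff]
    by_cases h : ∃ n, q.1 n = x
    · have hval : Tg q.1 q.2 x = q.1 (Nat.find h + 1) := dif_pos h
      rw [hval]
      constructor
      · intro hz
        exact Or.inl ⟨Nat.find h, ⟨Nat.find_spec h, fun k hk => Nat.find_min h hk⟩, hz⟩
      · rintro (⟨n, ⟨⟨hn1, hn2⟩, hn3⟩⟩ | ⟨hall, -⟩)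
        · have hfind : Nat.find h = n := by
            rw [Nat.find_eq_iff]
            exact ⟨hn1, hn2⟩
          rw [hfind]; exact hn3
        · exact absurd (Nat.find_spec h) (hall _)
    · have hval : Tg q.1 q.2 x = q.2 x := dif_neg h
      rw [hval]
      push_neg at h
      constructor
      · intro hz; exact Or.inr ⟨h, hz⟩
      · rintro (⟨n, ⟨⟨hn1, -⟩, -⟩⟩ | ⟨-, hz⟩)
        · exact absurd hn1 (h n)
        · exact hz
  have hmeasfst : ∀ k : ℕ, Measurable fun q : (ℕ → G) × (G → G) => q.1 k := fun k =>
    (measurable_pi_apply k).comp measurable_fst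
  rw [hdecomp]
  refine MeasurableSet.union ?_ ?_
  · refine MeasurableSet.iUnion fun n => ?_
    exact (((hmeasfst n) (measurableSet_singleton x)).inter
      (MeasurableSet.iInter fun k => MeasurableSet.iInter fun _ =>
        ((hmeasfst k) (measurableSet_singleton x)).compl)).inter
      ((hmeasfst (n + 1)) (measurableSet_singleton z))
  · exact (MeasurableSet.iInter fun n => ((hmeasfst n) (measurableSet_singleton x)).compl).inter
      (((measurable_pi_apply x).comp measurable_snd) (measurableSet_singleton z))

noncomputable def phi (A : Set (G × (G → G))) (μ : Measure (G → G)) : (ℕ → G) → ℝ≥0∞ :=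
  fun ω => μ {g | (ω 0, Tg ω g) ∈ A}

lemma measurable_phi {μ : Measure (G → G)} [SFinite μ] {A : Set (G × (G → G))}
    (hA : MeasurableSet A) : Measurable (phi A μ) := by
  have hset : MeasurableSet {q : (ℕ → G) × (G → G) | (q.1 0, Tg q.1 q.2) ∈ A} :=
    (((measurable_pi_apply 0).comp measurable_fst).prodMk measurable_Tg) hA
  exact measurable_measure_prodMk_left (ν := μ) hset

lemma star_lemma {K : G → Measure G} {μ : Measure (G → G)} [IsProbabilityMeasure μ]
    (hμ : IsCMTLaw K μ) {A : Set (G × (G → G))} (hA : IsTailBranchProperty A) (v : G) :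
    (μ.prod μ) {p : (G → G) × (G → G) | ¬(((v, p.1) ∈ A) ↔ ((v, graft ∅ v p) ∈ A))} = 0 := by
  classical
  set Av : Set (G → G) := Prod.mk v ⁻¹' A with hAvdef
  have hAvm : MeasurableSet Av := measurable_prodMk_left hA.1.1
  set badS : Set ((G → G) × (G → G)) :=
    {p : (G → G) × (G → G) | ¬(((v, p.1) ∈ A) ↔ ((v, graft ∅ v p) ∈ A))} with hbadS
  have hbound : ∀ ε : ℝ≥0∞, ε ≠ 0 → (μ.prod μ) badS ≤ ε + ε := by
    intro ε hε
    obtain ⟨E, C, hDet, hle⟩ := exists_detBy_approx (μ := μ) Av hAvm ε hε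
    have hCm : MeasurableSet C := hDet.measurableSet
    have hL1 : ∀ p : (G → G) × (G → G),
        ((v, graft ∅ v p) ∈ A ↔ (v, graft E v p) ∈ A) := by
      intro p
      apply mem_iff_of_eq_on_orbit hA
      · refine Set.Finite.subset E.finite_toSet ?_
        intro x hx
        by_contra hxE
        apply hx
        show graft ∅ v p x = graft E v p x
        by_cases hex : ∃ k, p.1^[k] v = x
        · rw [graft_pos (Or.inr hex), graft_pos (Or.inr hex)]
        · have hc1 : ¬(x ∈ (∅ : Finset G) ∨ ∃ k, p.1^[k] v = x) := by
            rintro (h | h)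
            · exact absurd h (Finset.notMem_empty x)
            · exact hex h
          have hc2 : ¬(x ∈ E ∨ ∃ k, p.1^[k] v = x) := by
            rintro (h | h)
            · exact hxE h
            · exact hex h
          rw [graft_neg hc1, graft_neg hc2]
      · intro n
        have ho : (graft ∅ v p)^[n] v = p.1^[n] v := graft_orbit ∅ v p n
        rw [ho, graft_pos (Or.inr ⟨n, rfl⟩), graft_pos (Or.inr ⟨n, rfl⟩)]
    have hincl : badS ⊆ (symmDiff Av C ×ˢ (Set.univ : Set (G → G)))
        ∪ (fun p : (G → G) × (G → G) => graft E v p) ⁻¹' symmDiff Av C := by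
      intro p hp
      simp only [hbadS, Set.mem_setOf_eq] at hp
      rw [hL1 p] at hp
      by_contra hc
      obtain ⟨h1, h2⟩ := not_or.mp hc
      have h1' : p.1 ∉ symmDiff Av C := fun hx => h1 ⟨hx, trivial⟩
      have h2' : graft E v p ∉ symmDiff Av C := h2
      rw [Set.mem_symmDiff] at h1' h2'
      have hEagree : ∀ x ∈ E, p.1 x = graft E v p x := fun x hx =>
        (graft_pos (Or.inl hx)).symm
      have hCiff : (p.1 ∈ C ↔ graft E v p ∈ C) := hDet p.1 (graft E v p) hEagree
      have ha : ((v, p.1) ∈ A) ↔ p.1 ∈ Av := Iff.rfl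
      have hb : ((v, graft E v p) ∈ A) ↔ graft E v p ∈ Av := Iff.rfl
      rw [ha, hb] at hp
      tauto
    calc (μ.prod μ) badS
        ≤ (μ.prod μ) ((symmDiff Av C ×ˢ (Set.univ : Set (G → G)))
            ∪ (fun p : (G → G) × (G → G) => graft E v p) ⁻¹' symmDiff Av C) :=
          measure_mono hincl
      _ ≤ (μ.prod μ) (symmDiff Av C ×ˢ (Set.univ : Set (G → G)))
          + (μ.prod μ) ((fun p : (G → G) × (G → G) => graft E v p) ⁻¹' symmDiff Av C) :=
          measure_union_le _ _
      _ ≤ ε + ε := by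
          have e1 : (μ.prod μ) (symmDiff Av C ×ˢ (Set.univ : Set (G → G)))
              = μ (symmDiff Av C) := by
            rw [Measure.prod_prod, measure_univ, mul_one]
          have e2 : (μ.prod μ) ((fun p : (G → G) × (G → G) => graft E v p) ⁻¹' symmDiff Av C)
              = μ (symmDiff Av C) := by
            rw [← Measure.map_apply (measurable_graft E v) (hAvm.symmDiff hCm),
              law_graft hμ E v]
          rw [e1, e2]
          exact add_le_add hle hle
  by_contra hm0
  have hmfin : (μ.prod μ) badS ≠ ⊤ := measure_ne_top _ _
  have hq : (μ.prod μ) badS / 4 ≠ 0 := by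
    simp only [ne_eq, ENNReal.div_eq_zero_iff, not_or]
    exact ⟨hm0, by norm_num⟩
  have h1 := hbound ((μ.prod μ) badS / 4) hq
  have hhalf : (μ.prod μ) badS / 4 + (μ.prod μ) badS / 4 = (μ.prod μ) badS / 2 := by
    rw [ENNReal.div_add_div_same]
    rw [show (μ.prod μ) badS + (μ.prod μ) badS = 2 * (μ.prod μ) badS from (two_mul _).symm]
    rw [show (4 : ℝ≥0∞) = 2 * 2 by norm_num]
    exact ENNReal.mul_div_mul_left _ _ (by norm_num) (by norm_num)
  rw [hhalf] at h1
  exact lt_irrefl _ (lt_of_le_of_lt h1 (ENNReal.half_lt_self hm0 hmfin))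

open scoped Classical in
lemma key2 {K : G → Measure G} {μ : Measure (G → G)} [IsProbabilityMeasure μ]
    (hμ : IsCMTLaw K μ) {A : Set (G × (G → G))} (hA : IsTailBranchProperty A) (v : G) :
    ∀ᵐ f ∂μ, phi A μ (ancLine (v, f)) = (if (v, f) ∈ A then 1 else 0) := by
  classical
  have h0 := star_lemma hμ hA v
  have h1 : ∀ᵐ p ∂(μ.prod μ), (((v, p.1) ∈ A) ↔ ((v, graft ∅ v p) ∈ A)) :=
    MeasureTheory.ae_iff.mpr h0
  have h2 := Measure.ae_ae_of_ae_prod h1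
  filter_upwards [h2] with f hf
  have hset : {g | (ancLine (v, f) 0, Tg (ancLine (v, f)) g) ∈ A}
      = {g | (v, graft ∅ v (f, g)) ∈ A} := by
    ext g
    simp only [Set.mem_setOf_eq]
    rw [Tg_anc]
    have h00 : ancLine (v, f) 0 = v := rfl
    rw [h00]
  show μ {g | (ancLine (v, f) 0, Tg (ancLine (v, f)) g) ∈ A} = _
  rw [hset]
  by_cases hvf : (v, f) ∈ A
  · rw [if_pos hvf]
    have hcompl0 : μ {g | (v, graft ∅ v (f, g)) ∈ A}ᶜ = 0 := by
      refine measure_eq_zero_iff_ae_notMem.mpr ?_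
      filter_upwards [hf] with g hg
      intro hc
      exact hc (hg.mp hvf)
    exact (measure_congr (MeasureTheory.ae_eq_univ.mpr hcompl0)).trans measure_univ
  · rw [if_neg hvf]
    refine measure_eq_zero_iff_ae_notMem.mpr ?_
    filter_upwards [hf] with g hg
    intro hc
    exact hvf (hg.mpr hc)

end Meas

/-- For a cycle-free CMT, the tail branch σ-algebra coincides modulo
`Q_G = (Σ_v δ_v) ⊗ ℙ_G` with the pullback under the ancestor-line map of the invariant path
σ-algebra. -/
theorem tail_branch_eq_invariant_path_mod_Q
    [Countable G] [MeasurableSpace G] [MeasurableSingletonClass G]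
    (K : G → Measure G) (hK : ∀ x, IsProbabilityMeasure (K x)) (hcf : CycleFree K)
    (μ : Measure (G → G)) [IsProbabilityMeasure μ] (hμ : IsCMTLaw K μ) :
    (∀ A : Set (G × (G → G)), IsTailBranchProperty A →
      ∃ A' : Set (ℕ → G), IsInvariantPathProperty A' ∧
        ((Measure.count : Measure G).prod μ) (symmDiff A (ancLine ⁻¹' A')) = 0) ∧
    (∀ A' : Set (ℕ → G), IsInvariantPathProperty A' →
      IsTailBranchProperty (ancLine ⁻¹' A')) := by
  classical
  constructor
  · intro A hA
    have hφm : Measurable (phi A μ) := measurable_phi hA.1.1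
    set A0 : Set (ℕ → G) := {ω | phi A μ ω = 1} with hA0def
    set A' : Set (ℕ → G) := {ω | ∀ N : ℕ, ∃ n, N ≤ n ∧ (fun i => ω (i + n)) ∈ A0} with hA'def
    have hA0m : MeasurableSet A0 := hφm (measurableSet_singleton 1)
    have hshiftm : ∀ n : ℕ, Measurable fun ω : ℕ → G => (fun i => ω (i + n)) := fun n =>
      measurable_pi_iff.mpr fun i => measurable_pi_apply _
    have hA'm : MeasurableSet A' := by
      have hrepr : A' = ⋂ N : ℕ, ⋃ n : ℕ, ⋃ (_ : N ≤ n),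
          (fun ω : ℕ → G => (fun i => ω (i + n))) ⁻¹' A0 := by
        ext ω
        simp only [hA'def, Set.mem_setOf_eq, Set.mem_iInter, Set.mem_iUnion, Set.mem_preimage,
          exists_prop]
      rw [hrepr]
      exact MeasurableSet.iInter fun N => MeasurableSet.iUnion fun n =>
        MeasurableSet.iUnion fun _ => (hshiftm n) hA0m
    have hA'inv : shift ⁻¹' A' = A' := by
      ext ω
      simp only [Set.mem_preimage, hA'def, Set.mem_setOf_eq]
      constructor
      · intro h N
        obtain ⟨n, hn, hmem⟩ := h N
        refine ⟨n + 1, by omega, ?_⟩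
        have he : (fun i => ω (i + (n + 1))) = fun i => shift ω (i + n) := by
          funext i
          show ω (i + (n + 1)) = ω (i + n + 1)
          ring_nf
        rw [he]
        exact hmem
      · intro h N
        obtain ⟨m, hm, hmem⟩ := h (N + 1)
        refine ⟨m - 1, by omega, ?_⟩
        have he : (fun i => shift ω (i + (m - 1))) = fun i => ω (i + m) := by
          funext i
          show ω (i + (m - 1) + 1) = ω (i + m)
          congr 1
          omega
        rw [he]
        exact hmem
    refine ⟨A', ⟨hA'm, hA'inv⟩, ?_⟩
    have hkey : ∀ᵐ f ∂μ, ∀ w : G, phi A μ (ancLine (w, f)) = (if (w, f) ∈ A then 1 else 0) :=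
      (MeasureTheory.ae_all_iff).mpr fun w => key2 hμ hA w
    have hgood : ∀ v : G, ∀ f : G → G,
        (∀ w : G, phi A μ (ancLine (w, f)) = (if (w, f) ∈ A then 1 else 0)) →
        ((v, f) ∈ A ↔ ancLine (v, f) ∈ A') := by
      intro v f hf
      have hshift : ∀ n : ℕ, (fun i => ancLine (v, f) (i + n)) = ancLine (f^[n] v, f) := by
        intro n
        funext i
        show f^[i + n] v = f^[i] (f^[n] v)
        exact Function.iterate_add_apply f i n v
      have hval : ∀ n : ℕ, phi A μ (fun i => ancLine (v, f) (i + n))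
          = (if (v, f) ∈ A then 1 else 0) := by
        intro n
        rw [hshift n, hf (f^[n] v)]
        by_cases hvf : (v, f) ∈ A
        · rw [if_pos hvf,
            if_pos ((hA.1.2 f (f^[n] v) v (sameComponent_iterate f v n)).mpr hvf)]
        · rw [if_neg hvf,
            if_neg (fun hc => hvf ((hA.1.2 f (f^[n] v) v (sameComponent_iterate f v n)).mp hc))]
      constructor
      · intro hvf N
        refine ⟨N, le_rfl, ?_⟩
        show phi A μ (fun i => ancLine (v, f) (i + N)) = 1
        rw [hval N, if_pos hvf]
      · intro hmem
        by_contra hvf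
        obtain ⟨n, -, hn⟩ := hmem 0
        have h1 : phi A μ (fun i => ancLine (v, f) (i + n)) = 1 := hn
        rw [hval n, if_neg hvf] at h1
        exact zero_ne_one h1
    have hΔm : MeasurableSet (symmDiff A (ancLine ⁻¹' A')) :=
      MeasurableSet.symmDiff hA.1.1 (measurable_ancLine hA'm)
    rw [Measure.prod_apply hΔm]
    have hz : ∀ v : G, μ (Prod.mk v ⁻¹' symmDiff A (ancLine ⁻¹' A')) = 0 := by
      intro v
      refine measure_mono_null ?_ (MeasureTheory.ae_iff.mp hkey)
      intro f hf
      simp only [Set.mem_setOf_eq]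
      intro hPf
      have hiff := hgood v f hPf
      rw [Set.mem_preimage, Set.mem_symmDiff] at hf
      rcases hf with ⟨h1, h2⟩ | ⟨h1, h2⟩
      · exact h2 (hiff.mp h1)
      · exact h2 (hiff.mpr h1)
    calc ∫⁻ v, μ (Prod.mk v ⁻¹' symmDiff A (ancLine ⁻¹' A')) ∂(Measure.count : Measure G)
        = ∫⁻ _ : G, 0 ∂(Measure.count : Measure G) := lintegral_congr hz
      _ = 0 := lintegral_zero
  · intro A' hA'
    exact partB A' hA'


end CMTPaper
end

section
/- Let K be a cycle-free Markov kernel on a countable set G such that: (a) the graph on vertex set G with edge set {(u,v) : K(u,{v}) + K(v,{u}) > 0} is connected (weak irreducibility); (b) for every u ∈ G and every integer d₀ ≥ 1 there exist n ≥ 1 and y ∈ G with K^n(u,{y}) > 0 and K^{n+d₀}(u,{y}) > 0; (c) ℙ_G-almost surely the graph of the CMT F with kernel K is locally finite and every level set of F is infinite. Then the graph on vertex set G with edge set {(u,v) : ℙ_G({f : v ∈ L_f(u)}) > 0} is connected. -/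
open MeasureTheory ENNReal

namespace CMTPaper

variable {G : Type*}

section Proof19
variable [Countable G] [MeasurableSpace G] [MeasurableSingletonClass G]
set_option linter.unusedSectionVars false
variable {K : G → Measure G} {μ : Measure (G → G)}

def Steps (K : G → Measure G) (c : ℕ → G) (m : ℕ) : Prop :=
  ∀ i < m, K (c i) {c (i + 1)} ≠ 0

lemma nStep_succ_apply (K : G → Measure G) (n : ℕ) (x y : G) :
    nStep K (n + 1) x {y} = ∑' z, K x {z} * nStep K n z {y} := by
  show (Measure.sum fun z => K x {z} • nStep K n z) {y} = _
  rw [Measure.sum_apply _ (measurableSet_singleton y)]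
  simp [Measure.smul_apply, smul_eq_mul]

lemma path_of_nStep : ∀ (n : ℕ) (x y : G), nStep K n x {y} ≠ 0 →
    ∃ c : ℕ → G, c 0 = x ∧ c n = y ∧ Steps K c n := by
  intro n
  induction n with
  | zero =>
    intro x y h
    refine ⟨fun _ => x, rfl, ?_, fun i hi => absurd hi (by omega)⟩
    by_contra hxy
    apply h
    show (Measure.dirac x) {y} = 0
    rw [Measure.dirac_apply' _ (measurableSet_singleton y)]
    simp [Set.indicator_of_notMem, hxy]
  | succ n ih =>
    intro x y h
    rw [nStep_succ_apply] at h
    have hz : ∃ z, K x {z} * nStep K n z {y} ≠ 0 := by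
      by_contra hall
      push_neg at hall
      exact h (ENNReal.tsum_eq_zero.mpr hall)
    obtain ⟨z, hz⟩ := hz
    have hz1 : K x {z} ≠ 0 := fun h0 => hz (by rw [h0, zero_mul])
    have hz2 : nStep K n z {y} ≠ 0 := fun h0 => hz (by rw [h0, mul_zero])
    obtain ⟨c, hc0, hcn, hcs⟩ := ih z y hz2
    refine ⟨fun i => Nat.casesOn i x (fun j => c j), rfl, hcn, ?_⟩
    intro i hi
    cases i with
    | zero => simpa [hc0] using hz1
    | succ j => exact hcs j (by omega)

lemma prod_le_nStep : ∀ (n : ℕ) (c : ℕ → G),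
    (∏ i ∈ Finset.range n, K (c i) {c (i + 1)}) ≤ nStep K n (c 0) {c n} := by
  intro n
  induction n with
  | zero =>
    intro c
    show _ ≤ (Measure.dirac (c 0)) {c 0}
    rw [Measure.dirac_apply' _ (measurableSet_singleton _)]
    simp
  | succ n ih =>
    intro c
    rw [nStep_succ_apply]
    calc (∏ i ∈ Finset.range (n+1), K (c i) {c (i+1)})
        = K (c 0) {c 1} * ∏ i ∈ Finset.range n, K (c (i+1)) {c (i+2)} := by
          rw [Finset.prod_range_succ']; ring
      _ ≤ K (c 0) {c 1} * nStep K n (c 1) {c (n+1)} :=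
          mul_le_mul_right (ih (fun i => c (i+1))) _
      _ ≤ ∑' z, K (c 0) {z} * nStep K n z {c (n+1)} := ENNReal.le_tsum (c 1)

lemma no_pos_cycle (hcf : CycleFree K) {c : ℕ → G} {m : ℕ}
    (hs : Steps K c m) (hm : 1 ≤ m) (hc : c m = c 0) : False := by
  have h1 : (∏ i ∈ Finset.range m, K (c i) {c (i+1)}) ≠ 0 :=
    Finset.prod_ne_zero_iff.mpr (fun i hi => hs i (Finset.mem_range.mp hi))
  have h2 := prod_le_nStep (K := K) m c
  rw [hc, hcf (c 0) m hm] at h2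
  exact h1 (le_zero_iff.mp h2)


/-- two positive paths x→y and y→x of total length ≥ 1 give a contradiction -/
lemma cycle_absurd (hcf : CycleFree K) {x y : G} {a b : ℕ}
    (c₁ : ℕ → G) (h₁0 : c₁ 0 = x) (h₁a : c₁ a = y) (h₁ : Steps K c₁ a)
    (c₂ : ℕ → G) (h₂0 : c₂ 0 = y) (h₂b : c₂ b = x) (h₂ : Steps K c₂ b)
    (hab : 1 ≤ a + b) : False := by
  set c : ℕ → G := fun i => if i < a then c₁ i else c₂ (i - a) with hcdef
  have hca : ∀ i ≤ a, c i = c₁ i := by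
    intro i hi
    by_cases h : i < a
    · simp [hcdef, h]
    · have hia : i = a := by omega
      subst hia
      simp only [hcdef, if_neg h, Nat.sub_self, h₂0, h₁a]
  have hcb : ∀ i, a ≤ i → c i = c₂ (i - a) := by
    intro i hi
    by_cases h : i < a
    · omega
    · simp [hcdef, h]
  have hsteps : Steps K c (a + b) := by
    intro i hi
    by_cases h : i < a
    · rw [hca i h.le, hca (i+1) (by omega)]
      exact h₁ i h
    · rw [hcb i (by omega), hcb (i+1) (by omega),
        show i + 1 - a = (i - a) + 1 by omega]
      exact h₂ (i - a) (by omega)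
  exact no_pos_cycle hcf hsteps hab (by
    rw [hcb (a+b) (by omega), show a + b - a = b by omega, h₂b, hca 0 (by omega), h₁0])

/-- positive paths are self-avoiding -/
lemma steps_inj (hcf : CycleFree K) {c : ℕ → G} {N : ℕ} (hs : Steps K c N) :
    ∀ i ≤ N, ∀ j ≤ N, c i = c j → i = j := by
  suffices H : ∀ i j, i < j → j ≤ N → c i ≠ c j by
    intro i hi j hj hij
    rcases lt_trichotomy i j with h | h | h
    · exact absurd hij (H i j h hj)
    · exact h
    · exact absurd hij.symm (H j i h hi)
  intro i j hij hj hc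
  refine no_pos_cycle hcf (c := fun r => c (i + r)) (m := j - i) ?_ (by omega) ?_
  · intro r hr
    exact hs (i + r) (by omega)
  · show c (i + (j - i)) = c (i + 0)
    rw [show i + (j - i) = j by omega]
    simpa using hc.symm

/-- trajectories of positive-step functions are injective in time -/
lemma good_inj (hcf : CycleFree K) {f : G → G} (hpos : ∀ x, K x {f x} ≠ 0) {x : G} :
    ∀ {i j : ℕ}, f^[i] x = f^[j] x → i = j := by
  suffices H : ∀ i j, i < j → f^[i] x ≠ f^[j] x by
    intro i j h
    rcases lt_trichotomy i j with h' | h' | h'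
    · exact absurd h (H i j h')
    · exact h'
    · exact absurd h.symm (H j i h')
  intro i j hij hc
  refine no_pos_cycle hcf (c := fun r => f^[r] (f^[i] x)) (m := j - i) ?_ (by omega) ?_
  · intro r _
    show K (f^[r] (f^[i] x)) {f^[r+1] (f^[i] x)} ≠ 0
    rw [Function.iterate_succ_apply']
    exact hpos _
  · show f^[j-i] (f^[i] x) = f^[0] (f^[i] x)
    rw [← Function.iterate_add_apply, show j - i + i = j by omega]
    simpa using hc.symm

lemma iterpre_finite {f : G → G} (hlf : ∀ x : G, {y | f y = x}.Finite) :
    ∀ (k : ℕ) (x : G), {m | f^[k] m = x}.Finite := by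
  intro k
  induction k with
  | zero =>
    intro x
    refine (Set.finite_singleton x).subset ?_
    intro m hm
    simpa using hm
  | succ k ih =>
    intro x
    refine ((ih x).biUnion (fun q _ => hlf q)).subset ?_
    intro m hm
    simp only [Set.mem_setOf_eq, Function.iterate_succ_apply] at hm
    simp only [Set.mem_iUnion]
    exact ⟨f m, hm, rfl⟩

open Classical in
noncomputable def splice (c : ℕ → G) (N : ℕ) (f : G → G) : G → G :=
  fun x => if h : ∃ j, j < N ∧ c j = x then c (Nat.find h + 1) else f x

open Classical in
lemma splice_mem {c : ℕ → G} {N : ℕ} (hinj : ∀ i ≤ N, ∀ j ≤ N, c i = c j → i = j)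
    (f : G → G) {j : ℕ} (hj : j < N) : splice c N f (c j) = c (j + 1) := by
  have h : ∃ j', j' < N ∧ c j' = c j := ⟨j, hj, rfl⟩
  rw [show splice c N f (c j) = if h : ∃ j', j' < N ∧ c j' = c j then c (Nat.find h + 1)
    else f (c j) from rfl, dif_pos h]
  obtain ⟨h1, h2⟩ := Nat.find_spec h
  rw [hinj _ h1.le _ hj.le h2]

open Classical in
lemma splice_not {c : ℕ → G} {N : ℕ} (f : G → G) {x : G} (hx : ∀ j < N, c j ≠ x) :
    splice c N f x = f x := by
  rw [show splice c N f x = if h : ∃ j, j < N ∧ c j = x then c (Nat.find h + 1)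
    else f x from rfl, dif_neg]
  rintro ⟨j, hj, hcj⟩
  exact hx j hj hcj

lemma splice_iter {c : ℕ → G} {N : ℕ} (hinj : ∀ i ≤ N, ∀ j ≤ N, c i = c j → i = j)
    (f : G → G) : ∀ j ≤ N, (splice c N f)^[j] (c 0) = c j := by
  intro j
  induction j with
  | zero => intro _; rfl
  | succ j ih =>
    intro hj
    rw [Function.iterate_succ_apply', ih (by omega), splice_mem hinj f (by omega)]

lemma forced {s : Finset G} {F f : G → G} (hf : ∀ x ∈ s, f x = F x) :
    ∀ (t : ℕ) (x : G), (∀ i < t, F^[i] x ∈ s) → f^[t] x = F^[t] x := by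
  intro t
  induction t with
  | zero => intro x _; rfl
  | succ t ih =>
    intro x hx
    rw [Function.iterate_succ_apply', Function.iterate_succ_apply',
      ih x (fun i hi => hx i (by omega)), hf _ (hx t (by omega))]

lemma edge_of_config (hμ : IsCMTLaw K μ)
    (s : Finset G) (F : G → G) (hpos : ∀ x ∈ s, K x {F x} ≠ 0)
    (a b : G) (t : ℕ) (ha : ∀ i < t, F^[i] a ∈ s) (hb : ∀ i < t, F^[i] b ∈ s)
    (hab : F^[t] a = F^[t] b) : 0 < μ {f | b ∈ levelSet f a} := by
  rw [pos_iff_ne_zero]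
  intro h0
  have hsub : {f : G → G | ∀ x ∈ s, f x = F x} ⊆ {f | b ∈ levelSet f a} := by
    intro f hf
    exact ⟨t, by rw [forced hf t b hb, forced hf t a ha]; exact hab.symm⟩
  have hle := measure_mono (μ := μ) hsub
  rw [h0, le_zero_iff, hμ s F] at hle
  exact Finset.prod_ne_zero_iff.mpr hpos hle

def Good (K : G → Measure G) (f : G → G) : Prop :=
  (∀ x : G, {y | f y = x}.Finite) ∧ (∀ v : G, (levelSet f v).Infinite) ∧ (∀ x, K x {f x} ≠ 0)

lemma cyl_single (hμ : IsCMTLaw K μ) (x y : G) : μ {f | f x = y} = K x {y} := by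
  have h := hμ {x} (fun _ => y)
  simpa using h

lemma exists_good (hμ : IsCMTLaw K μ)
    (hreg : ∀ᵐ f ∂μ, (∀ x : G, {y | f y = x}.Finite) ∧ ∀ v : G, (levelSet f v).Infinite)
    {E : Set (G → G)} (hE : μ E ≠ 0) : ∃ f ∈ E, Good K f := by
  classical
  have hB1 : μ {f : G → G | ¬ ((∀ x : G, {y | f y = x}.Finite) ∧
      ∀ v : G, (levelSet f v).Infinite)} = 0 := ae_iff.mp hreg
  set B2 : Set (G → G) :=
    ⋃ p : G × G, (if K p.1 {p.2} = 0 then {f : G → G | f p.1 = p.2} else ∅) with hB2def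
  have hB2 : μ B2 = 0 := by
    refine measure_iUnion_null fun p => ?_
    split_ifs with h
    · rw [cyl_single hμ]; exact h
    · exact measure_empty
  have hsub : E ⊆ (E ∩ {f | Good K f}) ∪
      ({f : G → G | ¬ ((∀ x : G, {y | f y = x}.Finite) ∧
        ∀ v : G, (levelSet f v).Infinite)} ∪ B2) := by
    intro f hf
    by_cases h1 : (∀ x : G, {y | f y = x}.Finite) ∧ ∀ v : G, (levelSet f v).Infinite
    · by_cases h2 : ∀ x, K x {f x} ≠ 0
      · exact Or.inl ⟨hf, h1.1, h1.2, h2⟩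
      · push_neg at h2
        obtain ⟨x, hx⟩ := h2
        refine Or.inr (Or.inr (Set.mem_iUnion.mpr ⟨(x, f x), ?_⟩))
        rw [if_pos hx]
        exact rfl
    · exact Or.inr (Or.inl h1)
  have hpos : μ (E ∩ {f | Good K f}) ≠ 0 := by
    intro h
    apply hE
    refine le_antisymm ?_ zero_le
    calc μ E ≤ μ ((E ∩ {f | Good K f}) ∪ (_ ∪ B2)) := measure_mono hsub
      _ ≤ μ (E ∩ {f | Good K f}) + μ (_ ∪ B2) := measure_union_le _ _
      _ ≤ μ (E ∩ {f | Good K f}) + (μ _ + μ B2) := by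
          gcongr
          exact measure_union_le _ _
      _ = 0 := by rw [h, hB1, hB2]; simp
  obtain ⟨f, hf⟩ := nonempty_of_measure_ne_zero hpos
  exact ⟨f, hf.1, hf.2⟩

lemma main_step (hcf : CycleFree K)
    (haper : ∀ u : G, ∀ d₀ : ℕ, 1 ≤ d₀ → ∃ n : ℕ, 1 ≤ n ∧ ∃ y : G,
      0 < nStep K n u {y} ∧ 0 < nStep K (n + d₀) u {y})
    (hμ : IsCMTLaw K μ)
    (hreg : ∀ᵐ f ∂μ, (∀ x : G, {y | f y = x}.Finite) ∧ ∀ v : G, (levelSet f v).Infinite)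
    {u v : G} (huv : K u {v} ≠ 0) :
    ∃ m, (0 < μ {f | m ∈ levelSet f u}) ∧ (0 < μ {f | v ∈ levelSet f m}) := by
  classical
  -- a single kernel step path u → v
  have hstep1 : Steps K (fun i => if i = 0 then u else v) 1 := by
    intro i hi
    have : i = 0 := by omega
    subst this
    simpa using huv
  have hne : u ≠ v := by
    rintro rfl
    exact no_pos_cycle hcf hstep1 le_rfl (by simp)
  -- aperiodicity witness at v
  obtain ⟨n, hn1, y, hy1, hy2⟩ := haper v 1 le_rfl
  obtain ⟨c, hc0, hcn, hcs⟩ := path_of_nStep n v y hy1.ne'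
  obtain ⟨c', hc'0, hc'n, hc's⟩ := path_of_nStep (n+1) v y hy2.ne'
  have hcinj := steps_inj hcf hcs
  have hc'inj := steps_inj hcf hc's
  -- u is not on the path c (before its end)
  have huc : ∀ j < n, c j ≠ u := by
    intro j hj hju
    rcases Nat.eq_zero_or_pos j with rfl | hjpos
    · rw [hc0] at hju
      exact hne hju.symm
    · exact cycle_absurd hcf c hc0 hju (fun i hi => hcs i (by omega))
        (fun i => if i = 0 then u else v) rfl (by simp) hstep1 (by omega)
  -- the forcing configuration: f u = v, f follows c
  set F₁ : G → G := splice c n (fun _ => v) with hF₁def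
  set s₁ : Finset G := insert u ((Finset.range n).image c) with hs₁def
  have hF₁u : F₁ u = v := splice_not _ (fun j hj => huc j hj)
  have hpos₁ : ∀ x ∈ s₁, K x {F₁ x} ≠ 0 := by
    intro x hx
    rcases Finset.mem_insert.mp hx with rfl | hx
    · rw [hF₁u]; exact huv
    · obtain ⟨j, hj, rfl⟩ := Finset.mem_image.mp hx
      have hj' := Finset.mem_range.mp hj
      rw [show F₁ (c j) = c (j+1) from splice_mem hcinj _ hj']
      exact hcs j hj'
  obtain ⟨f, hfE, hflf, hfli, hfpos⟩ :=
    exists_good hμ hreg (E := {f | ∀ x ∈ s₁, f x = F₁ x})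
      (by rw [hμ s₁ F₁]; exact Finset.prod_ne_zero_iff.mpr hpos₁)
  have hfu : f u = v := by
    rw [hfE u (Finset.mem_insert_self _ _), hF₁u]
  -- the forced orbit of u
  have horb : ∀ j ≤ n, f^[1 + j] u = c j := by
    intro j
    induction j with
    | zero =>
      intro _
      show f^[1] u = c 0
      rw [Function.iterate_one, hfu, hc0]
    | succ j ih =>
      intro hj
      rw [show 1 + (j+1) = (1+j) + 1 from rfl, Function.iterate_succ_apply', ih (by omega),
        hfE (c j) (Finset.mem_insert_of_mem (Finset.mem_image.mpr
          ⟨j, Finset.mem_range.mpr (by omega), rfl⟩)),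
        show F₁ (c j) = c (j+1) from splice_mem hcinj _ (by omega)]
  have hfy : f^[n+1] u = y := by
    rw [show n + 1 = 1 + n by omega, horb n le_rfl, hcn]
  have hfv1 : f^[1] u = v := by
    rw [Function.iterate_one, hfu]
  have hinj : ∀ {i j : ℕ}, f^[i] u = f^[j] u → i = j := good_inj hcf hfpos
  -- bad sets
  have hB1fin : (⋃ σ ∈ Set.Iic (n+1), {m' : G | f^[σ] m' = f^[σ] u}).Finite :=
    (Set.finite_Iic (n+1)).biUnion (fun σ _ => iterpre_finite hflf σ _)
  set Bad : G → Set G :=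
    fun x => {m' | ∃ r σ : ℕ, r < σ ∧ f^[r] m' = x ∧ f^[σ] m' = f^[σ] u} with hBaddef
  have hBadfin : ∀ x, (Bad x).Finite := by
    intro x
    rcases Set.eq_empty_or_nonempty (Bad x) with h | ⟨m₀, r₀, σ₀, hrσ₀, hr₀, hσ₀⟩
    · simp [h]
    · have key : ∀ (r σ : ℕ) (m' : G), r < σ → f^[r] m' = x → f^[σ] m' = f^[σ] u →
          f^[σ - r] x = f^[σ] u := by
        intro r σ m' h1 h2 h3
        rw [← h3, ← h2, ← Function.iterate_add_apply, show σ - r + r = σ by omega]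
      have A₀ := key r₀ σ₀ m₀ hrσ₀ hr₀ hσ₀
      refine (iterpre_finite hflf r₀ x).subset ?_
      rintro m' ⟨r, σ, hrσ, hr, hσ⟩
      have A := key r σ m' hrσ hr hσ
      have E1 : f^[(σ₀ - r₀) + σ] u = f^[(σ - r) + σ₀] u := by
        calc f^[(σ₀ - r₀) + σ] u = f^[σ₀ - r₀] (f^[σ] u) := Function.iterate_add_apply _ _ _ _
          _ = f^[σ₀ - r₀] (f^[σ - r] x) := by rw [A]
          _ = f^[(σ₀ - r₀) + (σ - r)] x := (Function.iterate_add_apply _ _ _ _).symm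
          _ = f^[(σ - r) + (σ₀ - r₀)] x := by rw [Nat.add_comm]
          _ = f^[σ - r] (f^[σ₀ - r₀] x) := Function.iterate_add_apply _ _ _ _
          _ = f^[σ - r] (f^[σ₀] u) := by rw [A₀]
          _ = f^[(σ - r) + σ₀] u := (Function.iterate_add_apply _ _ _ _).symm
      have E2 : (σ₀ - r₀) + σ = (σ - r) + σ₀ := hinj E1
      show f^[r₀] m' = x
      rw [show r₀ = r by omega]
      exact hr
  have hB2fin : (⋃ j ∈ Set.Icc 1 n, Bad (c' j)).Finite :=
    (Set.finite_Icc 1 n).biUnion (fun j _ => hBadfin _)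
  -- choose the middleman m
  obtain ⟨m, hmlev, hmB⟩ :=
    ((hfli u).diff (hB1fin.union hB2fin)).nonempty
  have hmB1 : m ∉ ⋃ σ ∈ Set.Iic (n+1), {m' : G | f^[σ] m' = f^[σ] u} :=
    fun h => hmB (Set.mem_union_left _ h)
  have hmB2 : m ∉ ⋃ j ∈ Set.Icc 1 n, Bad (c' j) :=
    fun h => hmB (Set.mem_union_right _ h)
  -- first meeting time of m with the trajectory of u
  have hex : ∃ nn : ℕ, f^[nn] m = f^[nn] u := hmlev
  set s : ℕ := Nat.find hex with hsdef
  have hmeet : f^[s] m = f^[s] u := Nat.find_spec hex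
  have hsmin : ∀ i < s, f^[i] m ≠ f^[i] u := fun i hi => Nat.find_min hex hi
  have hslb : n + 2 ≤ s := by
    by_contra h
    push_neg at h
    exact hmB1 (Set.mem_biUnion (show s ∈ Set.Iic (n+1) by simp; omega) hmeet)
  -- before the meeting, the trajectory of m avoids the whole trajectory of u
  have hpre : ∀ i < s, ∀ j, f^[i] m ≠ f^[j] u := by
    intro i hi j heq
    have h2 : f^[s - i + i] m = f^[(s - i) + j] u := by
      rw [Function.iterate_add_apply, heq, ← Function.iterate_add_apply]
    rw [show s - i + i = s by omega, hmeet] at h2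
    have h3 : s = s - i + j := hinj h2
    exact hsmin i hi (by rwa [show j = i by omega] at heq)
  -- Edge 1 : u — m
  have edge1 : 0 < μ {g | m ∈ levelSet g u} := by
    refine edge_of_config hμ
      ((Finset.range s).image (fun i => f^[i] u) ∪ (Finset.range s).image (fun i => f^[i] m))
      f ?_ u m s ?_ ?_ hmeet.symm
    · intro x hx
      rcases Finset.mem_union.mp hx with hx | hx <;>
        · obtain ⟨i, _, rfl⟩ := Finset.mem_image.mp hx
          exact hfpos _
    · intro i hi
      exact Finset.mem_union_left _ (Finset.mem_image.mpr ⟨i, Finset.mem_range.mpr hi, rfl⟩)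
    · intro i hi
      exact Finset.mem_union_right _ (Finset.mem_image.mpr ⟨i, Finset.mem_range.mpr hi, rfl⟩)
  -- the trajectory of m avoids the path c'
  have hmc' : ∀ i < s, ∀ j < n + 1, f^[i] m ≠ c' j := by
    intro i hi j hj heq
    rcases Nat.eq_zero_or_pos j with rfl | hjpos
    · rw [hc'0, ← hfv1] at heq
      exact hpre i hi 1 heq
    · exact hmB2 (Set.mem_biUnion (show j ∈ Set.Icc 1 n by simp; omega)
        ⟨i, s, hi, heq, hmeet⟩)
  -- the tail of the trajectory of u avoids the path c'
  have htc' : ∀ σ, n + 1 ≤ σ → σ < s → ∀ j < n + 1, f^[σ] u ≠ c' j := by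
    intro σ h1 h2 j hj heq
    rcases Nat.eq_zero_or_pos j with rfl | hjpos
    · rw [hc'0, ← hfv1] at heq
      have := hinj heq
      omega
    · rcases eq_or_lt_of_le h1 with rfl | h1'
      · rw [hfy] at heq
        have := hc'inj (n+1) le_rfl j (by omega) (by rw [hc'n, heq])
        omega
      · refine cycle_absurd hcf (a := n + 1 - j) (b := σ - (n+1))
          (fun i => c' (j + i)) rfl ?_ ?_
          (fun i => f^[i] y) rfl ?_ ?_ (by omega)
        · show c' (j + (n + 1 - j)) = y
          rw [show j + (n + 1 - j) = n + 1 by omega, hc'n]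
        · intro i hi
          exact hc's (j + i) (by omega)
        · show f^[σ - (n+1)] y = c' j
          rw [← hfy, ← Function.iterate_add_apply, show σ - (n+1) + (n+1) = σ by omega, heq]
        · intro i _
          show K (f^[i] y) {f^[i+1] y} ≠ 0
          rw [Function.iterate_succ_apply']
          exact hfpos _
  -- splice c' over f
  set F₂ : G → G := splice c' (n+1) f with hF₂def
  have hF₂m : ∀ i ≤ s, F₂^[i] m = f^[i] m := by
    intro i
    induction i with
    | zero => intro _; rfl
    | succ i ih =>
      intro hi
      rw [Function.iterate_succ_apply', Function.iterate_succ_apply', ih (by omega),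
        show F₂ (f^[i] m) = f (f^[i] m) from
          splice_not _ (fun j hj h => hmc' i (by omega) j hj h.symm)]
  have hF₂v1 : ∀ j ≤ n + 1, F₂^[j] v = c' j := by
    intro j hj
    rw [← hc'0]
    exact splice_iter hc'inj f j hj
  have hF₂v2 : ∀ σ, n + 1 ≤ σ → σ ≤ s → F₂^[σ] v = f^[σ] u := by
    intro σ h1 h2
    induction σ, h1 using Nat.le_induction with
    | base =>
      rw [hF₂v1 (n+1) le_rfl, hc'n, hfy]
    | succ σ h1 ih =>
      rw [Function.iterate_succ_apply', Function.iterate_succ_apply', ih (by omega),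
        show F₂ (f^[σ] u) = f (f^[σ] u) from
          splice_not _ (fun j hj h => htc' σ h1 (by omega) j hj h.symm)]
  -- Edge 2 : m — v
  have edge2 : 0 < μ {g | v ∈ levelSet g m} := by
    refine edge_of_config hμ
      (((Finset.range (n+1)).image c' ∪ (Finset.Ico (n+1) s).image (fun i => f^[i] u)) ∪
        (Finset.range s).image (fun i => f^[i] m))
      F₂ ?_ m v s ?_ ?_ ?_
    · intro x hx
      rcases Finset.mem_union.mp hx with hx | hx
      · rcases Finset.mem_union.mp hx with hx | hx
        · obtain ⟨j, hj, rfl⟩ := Finset.mem_image.mp hx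
          have hj' := Finset.mem_range.mp hj
          rw [show F₂ (c' j) = c' (j+1) from splice_mem hc'inj _ hj']
          exact hc's j hj'
        · obtain ⟨σ, hσ, rfl⟩ := Finset.mem_image.mp hx
          obtain ⟨hσ1, hσ2⟩ := Finset.mem_Ico.mp hσ
          rw [show F₂ (f^[σ] u) = f (f^[σ] u) from
            splice_not _ (fun j hj h => htc' σ hσ1 hσ2 j hj h.symm)]
          exact hfpos _
      · obtain ⟨i, hi, rfl⟩ := Finset.mem_image.mp hx
        have hi' := Finset.mem_range.mp hi
        rw [show F₂ (f^[i] m) = f (f^[i] m) from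
          splice_not _ (fun j hj h => hmc' i hi' j hj h.symm)]
        exact hfpos _
    · intro i hi
      rw [hF₂m i (by omega)]
      exact Finset.mem_union_right _ (Finset.mem_image.mpr ⟨i, Finset.mem_range.mpr hi, rfl⟩)
    · intro i hi
      by_cases h : i ≤ n
      · rw [hF₂v1 i (by omega)]
        exact Finset.mem_union_left _ (Finset.mem_union_left _
          (Finset.mem_image.mpr ⟨i, Finset.mem_range.mpr (by omega), rfl⟩))
      · rw [hF₂v2 i (by omega) (by omega)]
        exact Finset.mem_union_left _ (Finset.mem_union_right _
          (Finset.mem_image.mpr ⟨i, Finset.mem_Ico.mpr ⟨by omega, hi⟩, rfl⟩))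
    · rw [hF₂m s le_rfl, hF₂v2 s (by omega) le_rfl, hmeet]
  exact ⟨m, edge1, edge2⟩

end Proof19

/-- Under weak irreducibility, the strengthened weak aperiodicity condition
and a.s. local finiteness with infinite level sets, the graph with an edge between `u` and
`v` whenever `ℙ_G(v ∈ L_F(u)) > 0` is connected. -/
theorem levelset_graph_connected
    [Countable G] [MeasurableSpace G] [MeasurableSingletonClass G]
    (K : G → Measure G) (hK : ∀ x, IsProbabilityMeasure (K x)) (hcf : CycleFree K)
    (hirr : ∀ u v : G, Relation.ReflTransGen (fun a b => 0 < K a {b} + K b {a}) u v)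
    (haper : ∀ u : G, ∀ d₀ : ℕ, 1 ≤ d₀ → ∃ n : ℕ, 1 ≤ n ∧ ∃ y : G,
      0 < nStep K n u {y} ∧ 0 < nStep K (n + d₀) u {y})
    (μ : Measure (G → G)) [IsProbabilityMeasure μ] (hμ : IsCMTLaw K μ)
    (hreg : ∀ᵐ f ∂μ, (∀ x : G, {y | f y = x}.Finite) ∧ ∀ v : G, (levelSet f v).Infinite) :
    ∀ u v : G, Relation.ReflTransGen (fun a b => 0 < μ {f | b ∈ levelSet f a}) u v := by
  have hsymm : ∀ a b : G, 0 < μ {f | b ∈ levelSet f a} → 0 < μ {f | a ∈ levelSet f b} := by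
    intro a b h
    have hset : {f : G → G | b ∈ levelSet f a} = {f | a ∈ levelSet f b} := by
      ext f
      exact ⟨fun ⟨nn, h⟩ => ⟨nn, h.symm⟩, fun ⟨nn, h⟩ => ⟨nn, h.symm⟩⟩
    rwa [hset] at h
  have hstep : ∀ a b : G, 0 < K a {b} + K b {a} →
      Relation.ReflTransGen (fun a b => 0 < μ {f | b ∈ levelSet f a}) a b := by
    intro a b hab
    have hor : K a {b} ≠ 0 ∨ K b {a} ≠ 0 := by
      by_contra h
      push_neg at h
      rw [h.1, h.2, add_zero] at hab
      exact lt_irrefl _ hab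
    rcases hor with h | h
    · obtain ⟨m, h1, h2⟩ := main_step hcf haper hμ hreg h
      refine Relation.ReflTransGen.tail (b := m) (Relation.ReflTransGen.single ?_) ?_
      · exact h1
      · exact h2
    · obtain ⟨m, h1, h2⟩ := main_step hcf haper hμ hreg h
      refine Relation.ReflTransGen.tail (b := m) (Relation.ReflTransGen.single ?_) ?_
      · exact hsymm _ _ h2
      · exact hsymm _ _ h1
  intro u v
  have h := hirr u v
  induction h with
  | refl => exact Relation.ReflTransGen.refl
  | tail _ h2 ih => exact ih.trans (hstep _ _ h2)


end CMTPaper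
end
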